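/- arXiv:math/0305111 — 4 statements merged into one kernel-verified Lean document; each statement's English description precedes it below -/
import Mathlib

section
/- If M is a finitely generated graded module over the graded polynomial ring K[x₁,…,xₙ] where xᵢ has degree dᵢ ≥ 1, then the Hilbert series of M can be written as A(t)/((1-t^{d₁})⋯(1-t^{dₙ})) where A(t) is a Laurent polynomial with integer coefficients. -/
open MvPolynomial LaurentPolynomial

namespace HilbertAux


noncomputable section

/-- Convolution of a Laurent polynomial with a function. -/
def conv (Q : LaurentPolynomial ℤ) (H : ℤ → ℤ) (m : ℤ) : ℤ :=
  Q.coeff.sum fun k c => c * H (m - k)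

lemma conv_single (b : ℤ) (c : ℤ) (H : ℤ → ℤ) (m : ℤ) :
    conv (AddMonoidAlgebra.single b c) H m = c * H (m - b) :=
  Finsupp.sum_single_index (zero_mul _)

lemma conv_one (H : ℤ → ℤ) (m : ℤ) : conv 1 H m = H m := by
  rw [show (1 : LaurentPolynomial ℤ) = AddMonoidAlgebra.single 0 1 from rfl, conv_single]
  simp

lemma conv_add (Q₁ Q₂ : LaurentPolynomial ℤ) (H : ℤ → ℤ) (m : ℤ) :
    conv (Q₁ + Q₂) H m = conv Q₁ H m + conv Q₂ H m := by
  unfold conv; rw [AddMonoidAlgebra.coeff_add]; exact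
  Finsupp.sum_add_index' (fun _ => zero_mul _) (fun _ c₁ c₂ => add_mul c₁ c₂ _)

lemma conv_sub (Q₁ Q₂ : LaurentPolynomial ℤ) (H : ℤ → ℤ) (m : ℤ) :
    conv (Q₁ - Q₂) H m = conv Q₁ H m - conv Q₂ H m := by
  unfold conv; rw [AddMonoidAlgebra.coeff_sub]; exact
  Finsupp.sum_sub_index (fun _ c₁ c₂ => sub_mul c₁ c₂ _)

lemma conv_T_mul (a : ℤ) (Q : LaurentPolynomial ℤ) (H : ℤ → ℤ) (m : ℤ) :
    conv (T a * Q) H m = conv Q H (m - a) := by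
  induction Q using AddMonoidAlgebra.induction with
  | zero => simp [conv]
  | single_add b c f _ _ ih =>
    rw [mul_add, conv_add, conv_add, ih]
    congr 1
    have h : (T a * AddMonoidAlgebra.single b c : LaurentPolynomial ℤ)
        = AddMonoidAlgebra.single (a + b) c := by
      rw [show (T a : LaurentPolynomial ℤ) = AddMonoidAlgebra.single a 1 from rfl,
        AddMonoidAlgebra.single_mul_single, one_mul]
    rw [h]
    rw [conv_single, conv_single]
    ring_nf

lemma conv_one_sub_T_mul (a : ℤ) (Q : LaurentPolynomial ℤ) (H : ℤ → ℤ) (m : ℤ) :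
    conv ((1 - T a) * Q) H m = conv Q H m - conv Q H (m - a) := by
  rw [sub_mul, one_mul, conv_sub, conv_T_mul]

lemma exists_laurent_of_finite (f : ℤ → ℤ) (h : (Function.support f).Finite) :
    ∃ A : LaurentPolynomial ℤ, ∀ m, f m = A.coeff m :=
  ⟨AddMonoidAlgebra.ofCoeff (Finsupp.ofSupportFinite f h), fun _ => rfl⟩

lemma sub_apply' (A B : LaurentPolynomial ℤ) (m : ℤ) : (A - B).coeff m = A.coeff m - B.coeff m := rfl

lemma T_mul_apply (e : ℤ) (A : LaurentPolynomial ℤ) (m : ℤ) :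
    (T e * A : LaurentPolynomial ℤ).coeff m = A.coeff (m - e) := by
  rw [show (T e : LaurentPolynomial ℤ) = AddMonoidAlgebra.single e 1 from rfl]
  rw [AddMonoidAlgebra.coeff_single_mul_apply, one_mul, neg_add_eq_sub]

/-- rename of a weighted homogeneous polynomial is weighted homogeneous. -/
lemma isWeightedHomogeneous_rename {K : Type} [CommRing K] {σ τ : Type} (g : σ → τ)
    (w : τ → ℕ) {p : MvPolynomial σ K} {e : ℕ}
    (hp : p.IsWeightedHomogeneous (fun i => w (g i)) e) :
    (rename g p).IsWeightedHomogeneous w e := by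
  intro δ hδ
  obtain ⟨u, rfl, hu⟩ := coeff_rename_ne_zero g p δ hδ
  have h1 := hp hu
  rw [← h1]
  rw [Finsupp.weight_apply, Finsupp.weight_apply]
  exact Finsupp.sum_mapDomain_index (fun a => by simp) (fun a c₁ c₂ => by rw [add_smul])

lemma support_finrank_finite {K M : Type} [Field K] [AddCommGroup M] [Module K M]
    [FiniteDimensional K M] (ℳ : ℤ → Submodule K M) (hdecomp : DirectSum.IsInternal ℳ) :
    (Function.support fun m => (Module.finrank K (ℳ m) : ℤ)).Finite := by
  have hind := hdecomp.submodule_iSupIndep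
  haveI := hind.fintypeNeBotOfFiniteDimensional
  haveI : Finite {i : ℤ // ℳ i ≠ ⊥} := Finite.of_fintype _
  have hfin : {m : ℤ | ℳ m ≠ ⊥}.Finite := Set.finite_coe_iff.mp ‹_›
  apply hfin.subset
  intro m hm
  simp only [Function.mem_support, ne_eq] at hm
  simp only [Set.mem_setOf_eq, ne_eq]
  intro hbot
  apply hm
  rw [hbot]
  simp

end


noncomputable section

variable {K : Type} [Field K] {n : ℕ}

/-- Every polynomial is congruent mod `(X 0)` to the renaming of its image under
evaluation of `X 0 ↦ 0`. -/
lemma sub_rename_mem_span (p : MvPolynomial (Fin (n+1)) K) :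
    p - rename Fin.succ (aeval (Fin.cases 0 X) p) ∈
      Ideal.span {(X 0 : MvPolynomial (Fin (n+1)) K)} := by
  induction p using MvPolynomial.induction_on with
  | C a =>
    rw [aeval_C, MvPolynomial.algebraMap_eq, rename_C, sub_self]
    exact Ideal.zero_mem _
  | add p q hp hq =>
    rw [map_add, map_add, show p + q - (rename Fin.succ (aeval (Fin.cases 0 X) p)
        + rename Fin.succ (aeval (Fin.cases 0 X) q))
      = (p - rename Fin.succ (aeval (Fin.cases 0 X) p))
        + (q - rename Fin.succ (aeval (Fin.cases 0 X) q)) by ring]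
    exact Ideal.add_mem _ hp hq
  | mul_X p i hp =>
    refine Fin.cases ?_ ?_ i
    · rw [map_mul, aeval_X, Fin.cases_zero, mul_zero, map_zero, sub_zero]
      exact Ideal.mul_mem_left _ p (Ideal.subset_span rfl)
    · intro j
      rw [map_mul, aeval_X, Fin.cases_succ, map_mul, rename_X, ← sub_mul]
      exact Ideal.mul_mem_right _ _ hp

lemma smul_eq_of_annihilated {N : Type} [AddCommGroup N]
    [Module (MvPolynomial (Fin (n+1)) K) N]
    (hxN : ∀ v : N, (X 0 : MvPolynomial (Fin (n+1)) K) • v = 0)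
    (p : MvPolynomial (Fin (n+1)) K) (v : N) :
    p • v = (rename Fin.succ (aeval (Fin.cases 0 X) p) : MvPolynomial (Fin (n+1)) K) • v := by
  obtain ⟨a, ha⟩ := Ideal.mem_span_singleton'.mp (sub_rename_mem_span p)
  have h0 : (p - rename Fin.succ (aeval (Fin.cases 0 X) p)) • v = 0 := by
    rw [← ha, mul_smul, hxN, smul_zero]
  rw [sub_smul, sub_eq_zero] at h0
  exact h0

lemma finite_over_smaller (N : Type) [AddCommGroup N]
    [Module (MvPolynomial (Fin (n+1)) K) N]
    (hxN : ∀ v : N, (X 0 : MvPolynomial (Fin (n+1)) K) • v = 0)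
    [hNf : Module.Finite (MvPolynomial (Fin (n+1)) K) N] :
    letI : Module (MvPolynomial (Fin n) K) N :=
      Module.compHom N (rename Fin.succ : MvPolynomial (Fin n) K →ₐ[K]
        MvPolynomial (Fin (n+1)) K).toRingHom
    Module.Finite (MvPolynomial (Fin n) K) N := by
  letI : Module (MvPolynomial (Fin n) K) N :=
    Module.compHom N (rename Fin.succ : MvPolynomial (Fin n) K →ₐ[K]
      MvPolynomial (Fin (n+1)) K).toRingHom
  obtain ⟨S, hS⟩ := hNf.fg_top
  set N' : Submodule (MvPolynomial (Fin (n+1)) K) N :=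
    { carrier := (Submodule.span (MvPolynomial (Fin n) K) (S : Set N) : Set N)
      add_mem' := fun h1 h2 => Submodule.add_mem _ h1 h2
      zero_mem' := Submodule.zero_mem _
      smul_mem' := by
        intro r v hv
        rw [smul_eq_of_annihilated hxN r v]
        exact Submodule.smul_mem _ (aeval (Fin.cases 0 X) r) hv } with hN'
  refine ⟨⟨S, ?_⟩⟩
  rw [eq_top_iff]
  intro v _
  have hle : (⊤ : Submodule (MvPolynomial (Fin (n+1)) K) N) ≤ N' := by
    rw [← hS]
    exact Submodule.span_le.mpr (fun s hs => Submodule.subset_span hs)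
  exact hle trivial

end


noncomputable section

set_option maxHeartbeats 1000000 in
set_option synthInstance.maxHeartbeats 200000 in
theorem key (K : Type) [Field K] :
    ∀ (n : ℕ) (d : Fin n → ℕ) (M : Type) [AddCommGroup M] [Module K M]
      [Module (MvPolynomial (Fin n) K) M] [IsScalarTower K (MvPolynomial (Fin n) K) M]
      (ℳ : ℤ → Submodule K M), DirectSum.IsInternal ℳ →
      (∀ (e : ℕ) (p : MvPolynomial (Fin n) K), p ∈ weightedHomogeneousSubmodule K d e →
        ∀ (m : ℤ) (x : M), x ∈ ℳ m → p • x ∈ ℳ (m + e)) →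
      (∀ m : ℤ, FiniteDimensional K (ℳ m)) →
      Module.Finite (MvPolynomial (Fin n) K) M →
      ∃ A : LaurentPolynomial ℤ, ∀ m : ℤ,
        conv (∏ i, (1 - T (d i : ℤ))) (fun j => (Module.finrank K (ℳ j) : ℤ)) m = A.coeff m := by
  intro n
  induction n with
  | zero =>
    intro d M _ _ _ _ ℳ hdecomp hgraded hfin hMfg
    haveI := hMfg
    haveI : Module.Finite K (MvPolynomial (Fin 0) K) :=
      Module.Finite.equiv (MvPolynomial.isEmptyAlgEquiv K (Fin 0)).symm.toLinearEquiv
    haveI : Module.Finite K M := Module.Finite.trans (MvPolynomial (Fin 0) K) M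
    obtain ⟨A, hA⟩ := exists_laurent_of_finite _ (support_finrank_finite ℳ hdecomp)
    refine ⟨A, fun m => ?_⟩
    rw [show (∏ i : Fin 0, (1 - T (d i : ℤ)) : LaurentPolynomial ℤ) = 1 by simp,
      conv_one, hA]
  | succ n ih =>
    intro d M _ _ _ _ ℳ hdecomp hgraded hfin hMfg
    haveI := hMfg
    classical
    letI := hdecomp.chooseDecomposition
    set R := MvPolynomial (Fin (n+1)) K with hR
    set x : R := X 0 with hxdef
    set e : ℕ := d 0 with he
    have hxh : (x : R) ∈ weightedHomogeneousSubmodule K d e :=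
      isWeightedHomogeneous_X K d 0
    set ℓ : M →ₗ[R] M := LinearMap.lsmul R M x with hldef
    set ℓK : M →ₗ[K] M := ℓ.restrictScalars K with hlKdef
    set Z : Submodule R M := LinearMap.ker ℓ with hZdef
    set xM : Submodule R M := LinearMap.range ℓ with hxMdef
    set ZK : Submodule K M := Z.restrictScalars K with hZKdef
    set xMK : Submodule K M := xM.restrictScalars K with hxMKdef
    -- the key compatibility between decomposition and multiplication by x
    have L1 : ∀ (m : ℤ) (u : M), ((DirectSum.decompose ℳ (x • u) m : M))
        = x • (DirectSum.decompose ℳ u (m - (e:ℤ)) : M) := by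
      intro m u
      induction u using DirectSum.Decomposition.inductionOn ℳ with
      | zero => simp
      | @homogeneous k u =>
        have hxu : x • (u : M) ∈ ℳ (k + (e:ℤ)) := hgraded e x hxh k u u.2
        by_cases hm : m = k + (e:ℤ)
        · have hme : m - (e:ℤ) = k := by omega
          rw [hme, hm, DirectSum.decompose_of_mem_same ℳ hxu,
            DirectSum.decompose_of_mem_same ℳ u.2]
        · have hme : m - (e:ℤ) ≠ k := by omega
          rw [DirectSum.decompose_of_mem_ne ℳ hxu (by omega),
            DirectSum.decompose_of_mem_ne ℳ u.2 (by omega), smul_zero]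
      | add u v hu hv =>
        rw [smul_add, DirectSum.decompose_add, DirectSum.decompose_add]
        simp only [DirectSum.add_apply, Submodule.coe_add, hu, hv, smul_add]
    -- component of anything supported away from m vanishes in degree m
    have L2 : ∀ (m : ℤ) (v : M), v ∈ (⨆ k, ⨆ (_ : k ≠ m), ℳ k) →
        (DirectSum.decompose ℳ v m : M) = 0 := by
      intro m v hv
      refine Submodule.iSup_induction (fun k => ⨆ (_ : k ≠ m), ℳ k)
        (motive := fun w => (DirectSum.decompose ℳ w m : M) = 0) hv ?_ ?_ ?_
      · intro k w hw
        change w ∈ ⨆ (_ : k ≠ m), ℳ k at hw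
        by_cases hk : k = m
        · rw [show (⨆ (_ : k ≠ m), ℳ k) = ⊥ from iSup_neg (by omega)] at hw
          rw [Submodule.mem_bot] at hw
          rw [hw]
          simp
        · rw [iSup_pos hk] at hw
          exact DirectSum.decompose_of_mem_ne ℳ hw hk
      · simp
      · intro w₁ w₂ h₁ h₂
        rw [DirectSum.decompose_add]
        simp only [DirectSum.add_apply, Submodule.coe_add, h₁, h₂, add_zero]
    -- Z and xM are graded submodules
    have L3 : ∀ (m : ℤ) (z : M), z ∈ Z → (DirectSum.decompose ℳ z m : M) ∈ Z := by
      intro m z hz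
      have h0 : x • z = 0 := by
        have := hz
        rw [hZdef, LinearMap.mem_ker, hldef, LinearMap.lsmul_apply] at this
        exact this
      rw [hZdef, LinearMap.mem_ker, hldef, LinearMap.lsmul_apply]
      have h1 := L1 (m + (e:ℤ)) z
      rw [h0] at h1
      have h2 : (m + (e:ℤ)) - (e:ℤ) = m := by omega
      rw [h2] at h1
      simp only [DirectSum.decompose_zero, DirectSum.zero_apply,
        Submodule.coe_zero] at h1
      exact h1.symm
    have L4 : ∀ (m : ℤ) (v : M), v ∈ xM → (DirectSum.decompose ℳ v m : M) ∈ xM := by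
      rintro m v ⟨u, rfl⟩
      rw [hldef, LinearMap.lsmul_apply, L1 m u]
      exact ⟨DirectSum.decompose ℳ u (m - (e:ℤ)), rfl⟩
    -- image of a graded piece under multiplication by x
    have E2 : ∀ m : ℤ, Submodule.map ℓK (ℳ m) = xMK ⊓ ℳ (m + (e:ℤ)) := by
      intro m
      ext v
      constructor
      · rintro ⟨u, hu, rfl⟩
        refine ⟨⟨u, rfl⟩, ?_⟩
        show ℓ u ∈ ℳ (m + (e:ℤ))
        rw [hldef, LinearMap.lsmul_apply]
        exact hgraded e x hxh m u hu
      · rintro ⟨⟨u, rfl⟩, hv⟩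
        have hv' : x • u ∈ ℳ (m + (e:ℤ)) := by
          rw [hldef] at hv
          simpa using hv
        refine ⟨(DirectSum.decompose ℳ u m : M), SetLike.coe_mem _, ?_⟩
        show ℓ _ = ℓ u
        rw [hldef, LinearMap.lsmul_apply, LinearMap.lsmul_apply]
        have h1 := L1 (m + (e:ℤ)) u
        have h2 : (m + (e:ℤ)) - (e:ℤ) = m := by omega
        rw [h2] at h1
        rw [← h1, DirectSum.decompose_of_mem_same ℳ hv']
    -- ### the quotient and kernel modules
    set Q := M ⧸ xM with hQdef
    set mkK : M →ₗ[K] Q := xM.mkQ.restrictScalars K with hmkKdef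
    set J : ↥Z →ₗ[K] M := Z.subtype.restrictScalars K with hJdef
    set 𝒞 : ℤ → Submodule K Q := fun m => (ℳ m).map mkK with hCdef
    set 𝒵 : ℤ → Submodule K ↥Z := fun m => (ℳ m).comap J with hZZdef
    have injJ : Function.Injective J := fun a b h => Subtype.ext h
    have hJrange : LinearMap.range J = ZK := by
      ext v
      constructor
      · rintro ⟨z, rfl⟩
        exact z.2
      · intro hv
        exact ⟨⟨v, hv⟩, rfl⟩
    have hkermkK : LinearMap.ker mkK = xMK := by
      rw [hmkKdef, LinearMap.ker_restrictScalars, Submodule.ker_mkQ]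
    have hkerlK : LinearMap.ker ℓK = ZK := by
      rw [hlKdef, LinearMap.ker_restrictScalars]
    -- finrank of comap under subtype
    have hcomap : ∀ (p q : Submodule K M),
        Module.finrank K ↥(q.comap p.subtype) = Module.finrank K ↥(p ⊓ q) := by
      intro p q
      have h := (Submodule.equivMapOfInjective p.subtype
        (Submodule.injective_subtype p) (q.comap p.subtype)).finrank_eq
      rw [Submodule.map_comap_subtype] at h
      exact h
    -- rank-nullity for the quotient pieces
    have QC : ∀ m : ℤ, Module.finrank K ↥(𝒞 m) + Module.finrank K ↥(ℳ m ⊓ xMK)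
        = Module.finrank K ↥(ℳ m) := by
      intro m
      haveI := hfin m
      have h := LinearMap.finrank_range_add_finrank_ker (mkK ∘ₗ (ℳ m).subtype)
      rw [LinearMap.range_comp, Submodule.range_subtype, LinearMap.ker_comp, hkermkK,
        hcomap] at h
      exact h
    -- rank-nullity for multiplication by x on the pieces
    have RN : ∀ m : ℤ, Module.finrank K ↥(xMK ⊓ ℳ (m + (e:ℤ))) + Module.finrank K ↥(ℳ m ⊓ ZK)
        = Module.finrank K ↥(ℳ m) := by
      intro m
      haveI := hfin m
      have h := LinearMap.finrank_range_add_finrank_ker (ℓK ∘ₗ (ℳ m).subtype)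
      rw [LinearMap.range_comp, Submodule.range_subtype, LinearMap.ker_comp, hkerlK,
        hcomap, E2 m] at h
      exact h
    -- finrank of the kernel pieces
    have hmapJ : ∀ m : ℤ, Submodule.map J (𝒵 m) = ZK ⊓ ℳ m := by
      intro m
      rw [hZZdef]
      rw [Submodule.map_comap_eq, hJrange]
    have hrankZ : ∀ m : ℤ, Module.finrank K ↥(𝒵 m) = Module.finrank K ↥(ZK ⊓ ℳ m) := by
      intro m
      have h := LinearEquiv.finrank_eq (R := K) (M := ↥(𝒵 m))
        (Submodule.equivMapOfInjective J injJ (𝒵 m))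
      rw [hmapJ m] at h
      exact h
    have hfdZ : ∀ m : ℤ, FiniteDimensional K (𝒵 m) := by
      intro m
      haveI := hfin m
      haveI : FiniteDimensional K ↥(ZK ⊓ ℳ m) :=
        Submodule.finiteDimensional_of_le inf_le_right
      have h := hmapJ m
      exact Module.Finite.equiv ((Submodule.equivMapOfInjective J injJ (𝒵 m)).trans
        (LinearEquiv.ofEq _ _ h)).symm
    have hfdC : ∀ m : ℤ, FiniteDimensional K (𝒞 m) := by
      intro m
      haveI := hfin m
      exact Module.Finite.map (ℳ m) mkK
    -- ### internality of the induced gradings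
    have hintZ : DirectSum.IsInternal 𝒵 := by
      rw [DirectSum.isInternal_submodule_iff_iSupIndep_and_iSup_eq_top]
      constructor
      · intro m
        rw [disjoint_iff, eq_bot_iff]
        rintro z ⟨hz1, hz2⟩
        have hmap : J z ∈ Submodule.map J (⨆ k, ⨆ (_ : k ≠ m), 𝒵 k) :=
          Submodule.mem_map_of_mem hz2
        rw [Submodule.map_iSup] at hmap
        simp_rw [Submodule.map_iSup] at hmap
        have hle : (⨆ k, ⨆ (_ : k ≠ m), Submodule.map J (𝒵 k))
            ≤ ⨆ k, ⨆ (_ : k ≠ m), ℳ k :=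
          iSup_mono fun k => iSup_mono fun _ => Submodule.map_comap_le J (ℳ k)
        have h0 := L2 m (J z) (hle hmap)
        rw [DirectSum.decompose_of_mem_same ℳ hz1] at h0
        rw [Submodule.mem_bot]
        exact injJ (h0.trans (map_zero J).symm)
      · rw [eq_top_iff]
        intro z _
        have hzsum := DirectSum.sum_support_decompose ℳ (z : M)
        have hmem : ∀ k : ℤ, (DirectSum.decompose ℳ (z : M) k : M) ∈ Z :=
          fun k => L3 k (z : M) z.2
        have hz : z = ∑ k ∈ (DirectSum.decompose ℳ (z : M)).support,
            (⟨(DirectSum.decompose ℳ (z : M) k : M), hmem k⟩ : ↥Z) := by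
          apply Subtype.ext
          rw [AddSubmonoidClass.coe_finset_sum]
          exact hzsum.symm
        rw [hz]
        refine Submodule.sum_mem _ (fun k _ => Submodule.mem_iSup_of_mem k ?_)
        exact Submodule.mem_comap.mpr
          (SetLike.coe_mem (DirectSum.decompose ℳ (z : M) k))
    have hintC : DirectSum.IsInternal 𝒞 := by
      rw [DirectSum.isInternal_submodule_iff_iSupIndep_and_iSup_eq_top]
      constructor
      · intro m
        rw [disjoint_iff, eq_bot_iff]
        rintro c ⟨hc1, hc2⟩
        obtain ⟨a, ha, rfl⟩ := hc1
        have hc2' : mkK a ∈ Submodule.map mkK (⨆ k, ⨆ (_ : k ≠ m), ℳ k) := by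
          rw [Submodule.map_iSup]
          simp_rw [Submodule.map_iSup]
          exact hc2
        obtain ⟨b, hb, hab⟩ := hc2'
        have hsub : a - b ∈ xMK := by
          have : mkK (a - b) = 0 := by rw [map_sub, hab, sub_self]
          rw [← hkermkK]
          exact this
        have hdec : (DirectSum.decompose ℳ (a - b) m : M) ∈ xM := L4 m _ hsub
        have hda : (DirectSum.decompose ℳ a m : M) = a :=
          DirectSum.decompose_of_mem_same ℳ ha
        have hdb : (DirectSum.decompose ℳ b m : M) = 0 := L2 m b hb
        rw [DirectSum.decompose_sub, DirectSum.sub_apply,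
          AddSubgroupClass.coe_sub, hda, hdb, sub_zero] at hdec
        have ha' : a ∈ LinearMap.ker mkK := by rw [hkermkK]; exact hdec
        rw [Submodule.mem_bot]
        exact LinearMap.mem_ker.mp ha'
      · rw [eq_top_iff]
        intro c _
        obtain ⟨u, rfl⟩ := Submodule.mkQ_surjective xM c
        have husum := DirectSum.sum_support_decompose ℳ u
        have h3 : mkK u ∈ ⨆ k, 𝒞 k := by
          have h2 : mkK u = ∑ k ∈ (DirectSum.decompose ℳ u).support,
              mkK ((DirectSum.decompose ℳ u k : M)) := by
            conv_lhs => rw [← husum]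
            rw [map_sum]
          rw [h2]
          exact Submodule.sum_mem _ fun k _ => Submodule.mem_iSup_of_mem k
            (Submodule.mem_map_of_mem (SetLike.coe_mem _))
        exact h3
    -- ### module structures over the smaller polynomial ring
    set R' := MvPolynomial (Fin n) K with hR'def
    set φ : R' →ₐ[K] R := rename Fin.succ with hphidef
    have hxZ : ∀ z : ↥Z, x • z = 0 := by
      intro z
      have hz : x • (z : M) = 0 := z.2
      apply Subtype.ext
      show x • (z : M) = ((0 : ↥Z) : M)
      rw [ZeroMemClass.coe_zero]
      exact hz
    have hxQ : ∀ q : Q, x • q = 0 := by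
      intro q
      obtain ⟨u, rfl⟩ := Submodule.mkQ_surjective xM q
      rw [show x • xM.mkQ u = xM.mkQ (x • u) from (map_smul xM.mkQ x u).symm]
      rw [Submodule.mkQ_apply, Submodule.Quotient.mk_eq_zero]
      exact ⟨u, rfl⟩
    letI modZ : Module R' ↥Z := Module.compHom _ φ.toRingHom
    letI modQ : Module R' Q := Module.compHom _ φ.toRingHom
    have hsmulZ : ∀ (r : R') (z : ↥Z), r • z = φ r • z := fun _ _ => rfl
    have hsmulQ : ∀ (r : R') (q : Q), r • q = φ r • q := fun _ _ => rfl
    have hφsmul : ∀ (k : K) (r : R'), φ (k • r) = k • φ r := by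
      intro k r
      rw [← AlgHom.toLinearMap_apply, ← AlgHom.toLinearMap_apply, map_smul]
    haveI towZ : IsScalarTower K R' ↥Z := ⟨fun k r z => by
      rw [hsmulZ, hsmulZ, hφsmul, smul_assoc]⟩
    haveI towQ : IsScalarTower K R' Q := ⟨fun k r q => by
      rw [hsmulQ, hsmulQ, hφsmul, smul_assoc]⟩
    -- graded action over the smaller ring
    have hgradZ : ∀ (e' : ℕ) (p : R'), p ∈ weightedHomogeneousSubmodule K
          (fun i => d (Fin.succ i)) e' →
        ∀ (m : ℤ) (z : ↥Z), z ∈ 𝒵 m → p • z ∈ 𝒵 (m + (e' : ℤ)) := by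
      intro e' p hp m z hz
      have hφp : φ p ∈ weightedHomogeneousSubmodule K d e' :=
        (mem_weightedHomogeneousSubmodule _ _ _ _).mpr
          (isWeightedHomogeneous_rename Fin.succ d hp)
      have hz' : (z : M) ∈ ℳ m := hz
      have hmem : φ p • (z : M) ∈ ℳ (m + (e' : ℤ)) := hgraded e' (φ p) hφp m z hz'
      rw [hsmulZ]
      exact Submodule.mem_comap.mpr hmem
    have hgradC : ∀ (e' : ℕ) (p : R'), p ∈ weightedHomogeneousSubmodule K
          (fun i => d (Fin.succ i)) e' →
        ∀ (m : ℤ) (c : Q), c ∈ 𝒞 m → p • c ∈ 𝒞 (m + (e' : ℤ)) := by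
      intro e' p hp m c hc
      have hφp : φ p ∈ weightedHomogeneousSubmodule K d e' :=
        (mem_weightedHomogeneousSubmodule _ _ _ _).mpr
          (isWeightedHomogeneous_rename Fin.succ d hp)
      obtain ⟨a, ha, rfl⟩ := hc
      rw [hsmulQ]
      refine ⟨φ p • a, hgraded e' (φ p) hφp m a ha, ?_⟩
      exact (map_smul xM.mkQ (φ p) a)
    -- module finiteness over the smaller ring
    haveI : IsNoetherian R M := isNoetherian_of_isNoetherianRing_of_finite R M
    haveI hZfinR : Module.Finite R ↥Z := Module.Finite.iff_fg.mpr (IsNoetherian.noetherian Z)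
    haveI hZfinR' : Module.Finite R' ↥Z := finite_over_smaller ↥Z hxZ
    haveI hQfinR' : Module.Finite R' Q := finite_over_smaller Q hxQ
    -- apply the induction hypothesis
    obtain ⟨AZ, hAZ⟩ := ih (fun i => d (Fin.succ i)) ↥Z 𝒵 hintZ hgradZ hfdZ hZfinR'
    obtain ⟨AC, hAC⟩ := ih (fun i => d (Fin.succ i)) Q 𝒞 hintC hgradC hfdC hQfinR'
    -- pointwise comparison of Hilbert functions
    have hpoint : ∀ j : ℤ, (Module.finrank K ↥(ℳ j) : ℤ)
          - Module.finrank K ↥(ℳ (j - (e:ℤ)))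
        = (Module.finrank K ↥(𝒞 j) : ℤ) - Module.finrank K ↥(𝒵 (j - (e:ℤ))) := by
      intro j
      have h1 := QC j
      have h2 := RN (j - (e:ℤ))
      rw [show (j - (e:ℤ)) + (e:ℤ) = j by omega] at h2
      have h3 := hrankZ (j - (e:ℤ))
      rw [inf_comm (ℳ j) xMK] at h1
      rw [inf_comm (ℳ (j - (e:ℤ))) ZK] at h2
      omega
    refine ⟨AC - T (e:ℤ) * AZ, fun m => ?_⟩
    rw [Fin.prod_univ_succ]
    rw [conv_one_sub_T_mul]
    have big : conv (∏ i : Fin n, (1 - T ((d (Fin.succ i)) : ℤ)))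
          (fun j => (Module.finrank K ↥(ℳ j) : ℤ)) m
        - conv (∏ i : Fin n, (1 - T ((d (Fin.succ i)) : ℤ)))
          (fun j => (Module.finrank K ↥(ℳ j) : ℤ)) (m - (e:ℤ))
        = conv (∏ i : Fin n, (1 - T ((d (Fin.succ i)) : ℤ)))
          (fun j => (Module.finrank K ↥(𝒞 j) : ℤ)) m
        - conv (∏ i : Fin n, (1 - T ((d (Fin.succ i)) : ℤ)))
          (fun j => (Module.finrank K ↥(𝒵 j) : ℤ)) (m - (e:ℤ)) := by
      unfold conv
      rw [← Finsupp.sum_sub, ← Finsupp.sum_sub]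
      apply Finsupp.sum_congr
      intro k _
      have hp' := hpoint (m - k)
      have h4 : m - (e:ℤ) - k = (m - k) - (e:ℤ) := by ring
      rw [h4, ← mul_sub, ← mul_sub, hp']
    rw [big, hAC m, hAZ (m - (e:ℤ)), sub_apply', T_mul_apply]

end

end HilbertAux

/-- If `M` is a finitely generated graded module over the weighted polynomial ring
`K[x₁,…,xₙ]` with `deg xᵢ = dᵢ ≥ 1`, then the Hilbert series of `M` is
`A(t)/((1-t^{d₁})⋯(1-t^{dₙ}))` for a Laurent polynomial `A ∈ ℤ[t,t⁻¹]`; equivalently,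
`(∏ᵢ(1-t^{dᵢ}))·H(M,t)` is a Laurent polynomial `A` (stated coefficientwise). -/
theorem hilbert_series_fg_module_over_weighted_polynomial_ring
    (K : Type) [Field K] (n : ℕ) (d : Fin n → ℕ) (hd : ∀ i, 1 ≤ d i)
    (M : Type) [AddCommGroup M] [Module K M]
    [Module (MvPolynomial (Fin n) K) M]
    [IsScalarTower K (MvPolynomial (Fin n) K) M]
    (ℳ : ℤ → Submodule K M)
    (hdecomp : DirectSum.IsInternal ℳ)
    (hgraded : ∀ (e : ℕ) (p : MvPolynomial (Fin n) K),
      p ∈ weightedHomogeneousSubmodule K d e →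
      ∀ (m : ℤ) (x : M), x ∈ ℳ m → p • x ∈ ℳ (m + e))
    (hfin : ∀ m : ℤ, FiniteDimensional K (ℳ m))
    (hMfg : Module.Finite (MvPolynomial (Fin n) K) M)
    (H : ℤ → ℤ) (hH : ∀ m, H m = Module.finrank K (ℳ m))
    (P : LaurentPolynomial ℤ) (hP : P = ∏ i, (1 - LaurentPolynomial.T (d i))) :
    ∃ A : LaurentPolynomial ℤ, ∀ m : ℤ, (P.coeff.sum fun k c => c * H (m - k)) = A.coeff m := by
  obtain ⟨A, hA⟩ := HilbertAux.key K n d M ℳ hdecomp hgraded hfin hMfg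
  refine ⟨A, fun m => ?_⟩
  have h := hA m
  rw [hP]
  simp only [hH]
  exact h
end

section
/- Let X be an affine variety over an algebraically closed field K with an action of a torus T = (K*)^r, corresponding to a ℕ^r-grading of its coordinate ring R. Fix d = (d₁,…,d_r) ∈ ℕ^r with some dᵢ not divisible by char K. Let I^{[d]} ⊆ R be the ideal generated by all homogeneous elements whose degree e is not an integer multiple of d, and let T^{[d]} = ker(t ↦ t^d). Then the zero set of I^{[d]} equals the fixed-point set X^{T^{[d]}}. -/
section aux

variable {K : Type} [Field K] [IsAlgClosed K]

lemma aux_pow_eq_one_of_forall (n : ℕ) (h : ∀ s : Kˣ, (s : K) ^ n = 1) : n = 0 := by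
  by_contra hn
  have hpne : (Polynomial.X ^ n - Polynomial.C (1:K)) ≠ 0 :=
    Polynomial.X_pow_sub_C_ne_zero (Nat.pos_of_ne_zero hn) 1
  have hfin : Set.Finite {y : K | (Polynomial.X ^ n - Polynomial.C (1:K)).IsRoot y} :=
    Polynomial.finite_setOf_isRoot hpne
  have hsub : ({(0:K)}ᶜ : Set K) ⊆ {y : K | (Polynomial.X ^ n - Polynomial.C (1:K)).IsRoot y} := by
    intro y hy
    have hy0 : y ≠ 0 := hy
    have := h (Units.mk0 y hy0)
    simp only [Set.mem_setOf_eq, Polynomial.IsRoot, Polynomial.eval_sub, Polynomial.eval_pow, Polynomial.eval_X, Polynomial.eval_C, sub_eq_zero]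
    exact this
  have : Set.Finite ({(0:K)}ᶜ : Set K) := hfin.subset hsub
  exact (Set.Finite.infinite_compl (Set.finite_singleton (0:K))) this

lemma aux_pow_inj (a b : ℕ) (h : ∀ s : Kˣ, (s : K) ^ a = (s : K) ^ b) : a = b := by
  rcases le_total a b with hab | hab
  · have : b - a = 0 := by
      apply aux_pow_eq_one_of_forall (K := K)
      intro s
      have hs := h s
      have : (s : K) ^ a * (s:K) ^ (b - a) = (s:K) ^ a * 1 := by
        rw [← pow_add, Nat.add_sub_cancel' hab, hs, mul_one]
      exact mul_left_cancel₀ (pow_ne_zero a s.ne_zero) this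
    omega
  · have : a - b = 0 := by
      apply aux_pow_eq_one_of_forall (K := K)
      intro s
      have hs := (h s).symm
      have : (s : K) ^ b * (s:K) ^ (a - b) = (s:K) ^ b * 1 := by
        rw [← pow_add, Nat.add_sub_cancel' hab, hs, mul_one]
      exact mul_left_cancel₀ (pow_ne_zero b s.ne_zero) this
    omega

lemma aux_prod_single_pow {r : ℕ} (c : Kˣ) (j : Fin r) (m : Fin r → ℕ) :
    (∏ i, ((if i = j then c else 1 : Kˣ) : K) ^ m i) = (c : K) ^ m j := by
  rw [Finset.prod_eq_single j]
  · simp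
  · intro i _ hij; simp [hij]
  · intro h; exact absurd (Finset.mem_univ j) h

end aux



/-- Let `R` be a finitely generated `ℕ^r`-graded algebra over an algebraically closed
field `K`, corresponding to an affine variety `X` with an action of the torus
`T = (K*)^r` (so `t · f = t^e f` for `f` homogeneous of degree `e`). Fix `d ∈ ℕ^r`
with some `dᵢ` not divisible by `char K`. Let `I^{[d]}` be the ideal generated by all
homogeneous elements whose degree is not an integer multiple of `d`, and let
`T^{[d]} = ker(t ↦ t^d)`. Then a point `x` of `X` (a `K`-algebra homomorphism
`R → K`) lies in the zero set of `I^{[d]}` if and only if it is fixed by `T^{[d]}`. -/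
theorem zero_set_eq_torus_fixed_points
    (K : Type) [Field K] [IsAlgClosed K]
    (r : ℕ) (R : Type) [CommRing R] [Algebra K R]
    (𝒜 : (Fin r → ℕ) → Submodule K R) [GradedAlgebra 𝒜]
    (hRfg : Algebra.FiniteType K R)
    (d : Fin r → ℕ) (hchar : ∃ i, ¬ ((ringChar K : ℕ) ∣ d i))
    (Id : Ideal R)
    (hId : Id = Ideal.span {f : R | ∃ e : Fin r → ℕ,
      f ∈ 𝒜 e ∧ ¬ ∃ k : ℕ, e = k • d})
    (x : R →ₐ[K] K) :
    (∀ f ∈ Id, x f = 0) ↔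
      (∀ t : Fin r → Kˣ, (∏ i, ((t i : K)) ^ (d i)) = 1 →
        ∀ (e : Fin r → ℕ) (f : R), f ∈ 𝒜 e →
          (∏ i, ((t i : K)) ^ (e i)) * x f = x f) := by
  subst hId
  constructor
  · intro hx t ht e f hf
    by_cases he : ∃ k : ℕ, e = k • d
    · obtain ⟨k, rfl⟩ := he
      have h1 : (∏ i, ((t i : K)) ^ ((k • d) i)) = 1 := by
        have : ∀ i : Fin r, ((t i : K)) ^ ((k • d) i) = (((t i : K)) ^ (d i)) ^ k := by
          intro i
          rw [Pi.smul_apply, smul_eq_mul, ← pow_mul, mul_comm]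
        rw [Finset.prod_congr rfl (fun i _ => this i), Finset.prod_pow, ht, one_pow]
      rw [h1, one_mul]
    · rw [hx f (Ideal.subset_span ⟨e, hf, he⟩), mul_zero]
  · intro hfix f hfmem
    have hker : Ideal.span {f : R | ∃ e : Fin r → ℕ, f ∈ 𝒜 e ∧ ¬ ∃ k : ℕ, e = k • d}
        ≤ RingHom.ker (x : R →+* K) := by
      rw [Ideal.span_le]
      rintro f ⟨e, hf, he⟩
      simp only [SetLike.mem_coe, RingHom.mem_ker, RingHom.coe_coe]
      by_contra hx
      apply he
      -- every t in the subtorus fixes e-characters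
      have hT : ∀ t : Fin r → Kˣ, (∏ i, ((t i : K)) ^ (d i)) = 1 →
          (∏ i, ((t i : K)) ^ (e i)) = 1 := by
        intro t ht
        have h1 := hfix t ht e f hf
        refine mul_right_cancel₀ hx ?_
        rw [one_mul]; exact h1
      obtain ⟨i₀, hi₀⟩ := hchar
      have hd0 : d i₀ ≠ 0 := fun h => hi₀ (h ▸ dvd_zero _)
      have hd0' : 0 < d i₀ := Nat.pos_of_ne_zero hd0
      haveI : NeZero ((d i₀ : K)) := ⟨fun h => hi₀ ((ringChar.spec K (d i₀)).mp h)⟩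
      -- Step 1: d i₀ ∣ e i₀, via a primitive root of unity
      obtain ⟨ζ, hζ⟩ := HasEnoughRootsOfUnity.exists_primitiveRoot K (d i₀)
      obtain ⟨u, rfl⟩ := hζ.isUnit hd0
      have hdvd : d i₀ ∣ e i₀ := by
        have h1 : (∏ i, (((if i = i₀ then u else 1 : Kˣ)) : K) ^ (d i)) = 1 := by
          rw [aux_prod_single_pow]
          exact hζ.pow_eq_one
        have h2 := hT _ h1
        rw [aux_prod_single_pow] at h2
        exact hζ.dvd_of_pow_eq_one _ h2
      obtain ⟨k, hk⟩ := hdvd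
      -- Step 2: for every j, d i₀ * e j = d j * e i₀
      have hrel : ∀ j : Fin r, d i₀ * e j = d j * e i₀ := by
        intro j
        by_cases hj : j = i₀
        · subst hj; ring
        · apply aux_pow_inj (K := K)
          intro s
          set t : Fin r → Kˣ := fun i =>
            (if i = j then s ^ (d i₀) else 1) * (if i = i₀ then s⁻¹ ^ (d j) else 1) with htdef
          have hprod : ∀ m : Fin r → ℕ,
              (∏ i, ((t i : K)) ^ (m i))
                = ((s : K)) ^ (d i₀ * m j) * (((s : K))⁻¹) ^ (d j * m i₀) := by
            intro m
            have : ∀ i : Fin r, ((t i : K)) ^ (m i)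
                = (((if i = j then s ^ (d i₀) else 1 : Kˣ)) : K) ^ (m i)
                  * (((if i = i₀ then s⁻¹ ^ (d j) else 1 : Kˣ)) : K) ^ (m i) := by
              intro i
              rw [htdef]
              push_cast
              rw [mul_pow]
            rw [Finset.prod_congr rfl (fun i _ => this i), Finset.prod_mul_distrib,
              aux_prod_single_pow, aux_prod_single_pow]
            push_cast
            rw [← pow_mul, ← pow_mul]
          have ht : (∏ i, ((t i : K)) ^ (d i)) = 1 := by
            rw [hprod d, mul_comm (d j) (d i₀), ← mul_pow, mul_inv_cancel₀ s.ne_zero, one_pow]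
          have h2 := hT t ht
          rw [hprod e] at h2
          rw [inv_pow] at h2
          exact (mul_inv_eq_one₀ (pow_ne_zero _ s.ne_zero)).mp h2
      refine ⟨k, funext fun j => ?_⟩
      have := hrel j
      rw [hk] at this
      have : d i₀ * e j = d i₀ * (k * d j) := by rw [this]; ring
      have := Nat.eq_of_mul_eq_mul_left hd0' this
      simpa [Pi.smul_apply, smul_eq_mul] using this
    exact hker hfmem
end

section
/- Molien's formula: if a finite group G acts linearly on a finite-dimensional vector space V over a field K of characteristic 0, and S = K[V] is the symmetric algebra graded by degree, then H(S^G, t) = (1/|G|) Σ_{g∈G} 1/det(id_V − t·g), as an identity of formal power series in t. -/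
set_option maxHeartbeats 1000000
set_option synthInstance.maxHeartbeats 400000

open MvPolynomial

namespace MolienAux

noncomputable section

variable {K : Type*} [CommRing K] {n : ℕ}

/-- The substitution algebra endomorphism attached to a matrix. -/
def lin (M : Matrix (Fin n) (Fin n) K) :
    MvPolynomial (Fin n) K →ₐ[K] MvPolynomial (Fin n) K :=
  aeval (fun i => ∑ j, M i j • X j)

lemma lin_X (M : Matrix (Fin n) (Fin n) K) (i : Fin n) :
    lin M (X i) = ∑ j, M i j • X j := by simp [lin]

lemma lin_one : lin (1 : Matrix (Fin n) (Fin n) K) = AlgHom.id K _ := by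
  apply algHom_ext
  intro i
  simp [lin_X, Matrix.one_apply, ite_smul]

lemma lin_mul (M N : Matrix (Fin n) (Fin n) K) :
    lin (M * N) = (lin N).comp (lin M) := by
  apply algHom_ext
  intro i
  simp only [AlgHom.comp_apply, lin_X, map_sum, map_smul, Matrix.mul_apply,
    Finset.sum_smul, smul_smul, Finset.smul_sum]
  exact Finset.sum_comm

lemma linForm_isHomogeneous (M : Matrix (Fin n) (Fin n) K) (i : Fin n) :
    (∑ j, M i j • X j : MvPolynomial (Fin n) K).IsHomogeneous 1 := by
  apply MvPolynomial.IsHomogeneous.sum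
  intro j _
  rw [smul_eq_C_mul]
  exact isHomogeneous_C_mul_X _ _

lemma lin_isHomogeneous (M : Matrix (Fin n) (Fin n) K) {p : MvPolynomial (Fin n) K} {d : ℕ}
    (hp : p.IsHomogeneous d) : (lin M p).IsHomogeneous d := by
  have := hp.aeval (fun i => ∑ j, M i j • X j) (fun i => linForm_isHomogeneous M i)
  rw [one_mul] at this
  simpa [lin] using this

lemma lin_mem (M : Matrix (Fin n) (Fin n) K) {p : MvPolynomial (Fin n) K} {d : ℕ}
    (hp : p ∈ homogeneousSubmodule (Fin n) K d) :
    lin M p ∈ homogeneousSubmodule (Fin n) K d :=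
  lin_isHomogeneous M hp

/-- The finite set of exponents of degree `d` monomials. -/
abbrev SS (n d : ℕ) : Finset (Fin n →₀ ℕ) := Finset.univ.finsuppAntidiag d

lemma degree_eq_sum_univ (s : Fin n →₀ ℕ) : s.degree = ∑ i, s i :=
  Finset.sum_subset (Finset.subset_univ _) (fun i _ hi => Finsupp.notMem_support_iff.mp hi)

lemma mem_SS {d : ℕ} {s : Fin n →₀ ℕ} : s ∈ SS n d ↔ s.degree = d := by
  rw [Finset.mem_finsuppAntidiag]
  constructor
  · rintro ⟨h, -⟩
    rw [degree_eq_sum_univ]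
    exact h
  · intro h
    exact ⟨by rw [← degree_eq_sum_univ]; exact h, Finset.subset_univ _⟩

/-- Decomposition of a homogeneous polynomial in the monomial basis. -/
lemma homog_eq_sum {p : MvPolynomial (Fin n) K} {d : ℕ}
    (hp : p ∈ homogeneousSubmodule (Fin n) K d) :
    p = ∑ s ∈ SS n d, coeff s p • monomial s (1 : K) := by
  rw [mem_homogeneousSubmodule] at hp
  have : ∀ s ∈ SS n d, coeff s p • monomial s (1 : K) = monomial s (coeff s p) := by
    intro s _
    rw [smul_monomial, smul_eq_mul, mul_one]
  rw [Finset.sum_congr rfl this]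
  conv_lhs => rw [p.as_sum]
  apply Finset.sum_subset
  · intro v hv
    rw [mem_SS]
    by_contra h
    exact (mem_support_iff.mp hv) (hp.coeff_eq_zero h)
  · intro v _ hv
    rw [notMem_support_iff.mp hv, monomial_zero]

/-- The matrix of `lin M` on the degree `d` homogeneous component, in the monomial basis. -/
def Amat (d : ℕ) (M : Matrix (Fin n) (Fin n) K) : Matrix (SS n d) (SS n d) K :=
  fun s t => coeff t.1 (lin M (monomial s.1 1))

lemma monomial_mem_of_mem_SS {d : ℕ} {s : Fin n →₀ ℕ} (hs : s ∈ SS n d) :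
    (monomial s (1 : K)) ∈ homogeneousSubmodule (Fin n) K d := by
  rw [mem_homogeneousSubmodule]
  exact isHomogeneous_monomial _ (mem_SS.mp hs)

lemma Amat_one (d : ℕ) : Amat d (1 : Matrix (Fin n) (Fin n) K) = 1 := by
  ext s t
  simp [Amat, lin_one, coeff_monomial, Matrix.one_apply, ← Subtype.ext_iff, eq_comm]

lemma Amat_mul (d : ℕ) (M N : Matrix (Fin n) (Fin n) K) :
    Amat d (M * N) = Amat d M * Amat d N := by
  ext s t
  rw [Matrix.mul_apply]
  show coeff t.1 (lin (M * N) (monomial s.1 1)) = _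
  rw [lin_mul, AlgHom.comp_apply]
  have hmem : lin M (monomial s.1 1) ∈ homogeneousSubmodule (Fin n) K d :=
    lin_mem M (monomial_mem_of_mem_SS s.2)
  conv_lhs => rw [homog_eq_sum hmem, map_sum]
  rw [MvPolynomial.coeff_sum]
  simp_rw [map_smul, MvPolynomial.coeff_smul, smul_eq_mul]
  have hcs := Finset.sum_coe_sort (SS n d)
    (fun u => coeff u (lin M (monomial s.1 1)) * coeff t.1 (lin N (monomial u 1)))
  rw [← hcs]
  rfl

/-- `Amat d` as a monoid hom. -/
def AmatHom (d : ℕ) : Matrix (Fin n) (Fin n) K →* Matrix (SS n d) (SS n d) K where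
  toFun := Amat d
  map_one' := Amat_one d
  map_mul' := Amat_mul d

/-- The trace of the action on the degree-`d` component. -/
def trS (d : ℕ) (M : Matrix (Fin n) (Fin n) K) : K := Matrix.trace (Amat d M)

lemma trS_conj (d : ℕ) (P : (Matrix (Fin n) (Fin n) K)ˣ) (D : Matrix (Fin n) (Fin n) K) :
    trS d ((P : Matrix (Fin n) (Fin n) K) * D * (↑P⁻¹ : Matrix (Fin n) (Fin n) K)) = trS d D := by
  unfold trS
  rw [Amat_mul, Matrix.trace_mul_comm, ← Amat_mul]
  have : (↑P⁻¹ : Matrix (Fin n) (Fin n) K) * ((P : Matrix (Fin n) (Fin n) K) * D) = D := by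
    rw [← Matrix.mul_assoc]
    have h1 : (↑P⁻¹ : Matrix (Fin n) (Fin n) K) * (P : Matrix (Fin n) (Fin n) K) = 1 := by
      rw [← Units.val_mul, inv_mul_cancel, Units.val_one]
    rw [h1, Matrix.one_mul]
  rw [this]


section Part2

variable {K : Type*} [CommRing K] {n : ℕ}

lemma lin_monomial_eq_prod (M : Matrix (Fin n) (Fin n) K) (s : Fin n →₀ ℕ) :
    lin M (monomial s (1 : K)) = ∏ i ∈ s.support, (lin M (X i)) ^ s i := by
  rw [monomial_eq, C_1, one_mul, Finsupp.prod, map_prod]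
  simp only [map_pow]

lemma lin_diagonal (δ : Fin n → K) (s : Fin n →₀ ℕ) :
    lin (Matrix.diagonal δ) (monomial s (1 : K)) = (∏ i, δ i ^ s i) • monomial s (1 : K) := by
  have hX : ∀ i : Fin n, lin (Matrix.diagonal δ) (X i) = C (δ i) * X i := by
    intro i
    rw [lin_X, Finset.sum_eq_single i]
    · rw [Matrix.diagonal_apply_eq, smul_eq_C_mul]
    · intro j _ hj
      rw [Matrix.diagonal_apply_ne δ (Ne.symm hj), zero_smul]
    · intro h
      exact absurd (Finset.mem_univ i) h
  rw [lin_monomial_eq_prod]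
  simp_rw [hX, mul_pow, ← map_pow]
  rw [Finset.prod_mul_distrib, ← map_prod]
  have h1 : ∏ i ∈ s.support, δ i ^ s i = ∏ i, δ i ^ s i :=
    Finset.prod_subset (Finset.subset_univ _)
      (fun i _ hi => by rw [Finsupp.notMem_support_iff.mp hi, pow_zero])
  rw [h1, smul_eq_C_mul]
  congr 1
  rw [monomial_eq, C_1, one_mul, Finsupp.prod]

lemma Amat_diagonal (d : ℕ) (δ : Fin n → K) :
    Amat d (Matrix.diagonal δ)
      = Matrix.diagonal (fun s : SS n d => ∏ i, δ i ^ s.1 i) := by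
  ext s t
  show coeff t.1 (lin (Matrix.diagonal δ) (monomial s.1 1)) = _
  rw [lin_diagonal, MvPolynomial.coeff_smul]
  rcases eq_or_ne s t with h | h
  · subst h
    rw [Matrix.diagonal_apply_eq]
    simp [coeff_monomial]
  · rw [Matrix.diagonal_apply_ne _ h]
    have : s.1 ≠ t.1 := fun hc => h (Subtype.ext hc)
    simp [coeff_monomial, this]

lemma trS_diagonal (d : ℕ) (δ : Fin n → K) :
    trS d (Matrix.diagonal δ) = ∑ s ∈ SS n d, ∏ i, δ i ^ s i := by
  rw [trS, Amat_diagonal, Matrix.trace_diagonal]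
  exact Finset.sum_coe_sort (SS n d) (fun s => ∏ i, δ i ^ s i)

section Map

variable {F : Type*} [CommRing F]

lemma lin_map_monomial (f : K →+* F) (M : Matrix (Fin n) (Fin n) K) (s : Fin n →₀ ℕ) :
    lin (M.map f) (monomial s (1 : F)) = MvPolynomial.map f (lin M (monomial s (1 : K))) := by
  rw [lin_monomial_eq_prod, lin_monomial_eq_prod, map_prod]
  apply Finset.prod_congr rfl
  intro i _
  rw [map_pow]
  congr 1
  rw [lin_X, lin_X, map_sum]
  apply Finset.sum_congr rfl
  intro j _
  rw [smul_eq_C_mul, smul_eq_C_mul, map_mul, MvPolynomial.map_C, MvPolynomial.map_X,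
    Matrix.map_apply]

lemma Amat_map (d : ℕ) (f : K →+* F) (M : Matrix (Fin n) (Fin n) K) :
    Amat d (M.map f) = (Amat d M).map f := by
  ext s t
  show coeff t.1 (lin (M.map f) (monomial s.1 1)) = f (coeff t.1 (lin M (monomial s.1 1)))
  rw [lin_map_monomial, MvPolynomial.coeff_map]

lemma trS_map (d : ℕ) (f : K →+* F) (M : Matrix (Fin n) (Fin n) K) :
    trS d (M.map f) = f (trS d M) := by
  rw [trS, trS, Amat_map]
  simp [Matrix.trace, Matrix.diag, Matrix.map_apply]

end Map

lemma geom_mul (a : K) :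
    (1 - PowerSeries.C a * PowerSeries.X) * PowerSeries.mk (fun k => a ^ k) = 1 := by
  ext m
  rw [sub_mul, one_mul, map_sub]
  cases m with
  | zero =>
      simp [PowerSeries.coeff_zero_eq_constantCoeff]
  | succ m =>
      have h : PowerSeries.C a * PowerSeries.X * PowerSeries.mk (fun k => a ^ k)
          = PowerSeries.X * (PowerSeries.C a * PowerSeries.mk fun k => a ^ k) := by ring
      rw [PowerSeries.coeff_mk, h, PowerSeries.coeff_succ_X_mul, PowerSeries.coeff_C_mul,
        PowerSeries.coeff_mk, PowerSeries.coeff_one]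
      simp [pow_succ, mul_comm]

lemma diag_identity (δ : Fin n → K) :
    (∏ i, (1 - PowerSeries.C (δ i) * PowerSeries.X)) *
      PowerSeries.mk (fun e => ∑ s ∈ SS n e, ∏ i, δ i ^ s i) = 1 := by
  classical
  have h : PowerSeries.mk (fun e => ∑ s ∈ SS n e, ∏ i, δ i ^ s i)
      = ∏ i, PowerSeries.mk fun k => δ i ^ k := by
    ext e
    rw [PowerSeries.coeff_mk, PowerSeries.coeff_prod]
    exact Finset.sum_congr rfl fun s _ =>
      Finset.prod_congr rfl fun i _ => by rw [PowerSeries.coeff_mk]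
  rw [h, ← Finset.prod_mul_distrib]
  simp [geom_mul]

lemma detPoly_diagonal (δ : Fin n → K) :
    ((1 : Matrix (Fin n) (Fin n) (Polynomial K)) -
      (Polynomial.X : Polynomial K) • (Matrix.diagonal δ).map Polynomial.C).det
      = ∏ i, (1 - Polynomial.X * Polynomial.C (δ i)) := by
  have h : (1 : Matrix (Fin n) (Fin n) (Polynomial K)) -
      (Polynomial.X : Polynomial K) • (Matrix.diagonal δ).map Polynomial.C
      = Matrix.diagonal (fun i => 1 - Polynomial.X * Polynomial.C (δ i)) := by
    ext i j
    rcases eq_or_ne i j with hij | hij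
    · subst hij
      simp [Matrix.sub_apply, Matrix.smul_apply, Matrix.map_apply, smul_eq_mul]
    · simp [Matrix.sub_apply, Matrix.smul_apply, Matrix.map_apply, Matrix.one_apply_ne hij,
        Matrix.diagonal_apply_ne _ hij, smul_eq_mul]
  rw [h, Matrix.det_diagonal]

lemma detPoly_conj (P : (Matrix (Fin n) (Fin n) K)ˣ) (D : Matrix (Fin n) (Fin n) K) :
    ((1 : Matrix (Fin n) (Fin n) (Polynomial K)) -
      (Polynomial.X : Polynomial K) •
        (((P : Matrix (Fin n) (Fin n) K) * D * (↑P⁻¹ : Matrix (Fin n) (Fin n) K)).map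
          Polynomial.C)).det
      = ((1 : Matrix (Fin n) (Fin n) (Polynomial K)) -
          (Polynomial.X : Polynomial K) • (D.map Polynomial.C)).det := by
  classical
  set cm : Matrix (Fin n) (Fin n) K →+* Matrix (Fin n) (Fin n) (Polynomial K) :=
    (Polynomial.C : K →+* Polynomial K).mapMatrix with hcm
  set cmM : Matrix (Fin n) (Fin n) K →* Matrix (Fin n) (Fin n) (Polynomial K) :=
    cm.toMonoidHom with hcmM
  set Pc : (Matrix (Fin n) (Fin n) (Polynomial K))ˣ := Units.map cmM P with hPc
  have hPcval : (Pc : Matrix (Fin n) (Fin n) (Polynomial K))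
      = (P : Matrix (Fin n) (Fin n) K).map Polynomial.C := rfl
  have hPcinv : ((Pc⁻¹ : (Matrix (Fin n) (Fin n) (Polynomial K))ˣ) :
      Matrix (Fin n) (Fin n) (Polynomial K))
      = ((P⁻¹ : (Matrix (Fin n) (Fin n) K)ˣ) : Matrix (Fin n) (Fin n) K).map Polynomial.C := by
    rw [hPc, ← map_inv (Units.map cmM) P]
    rfl
  have hsplit : (1 : Matrix (Fin n) (Fin n) (Polynomial K)) -
      (Polynomial.X : Polynomial K) •
        (((P : Matrix (Fin n) (Fin n) K) * D * (↑P⁻¹ : Matrix (Fin n) (Fin n) K)).map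
          Polynomial.C)
      = Pc.val * ((1 : Matrix (Fin n) (Fin n) (Polynomial K)) -
          (Polynomial.X : Polynomial K) • (D.map Polynomial.C)) * (Pc⁻¹).val := by
    have h1 : Pc.val * (Pc⁻¹).val = 1 := Units.mul_inv Pc
    rw [Matrix.mul_sub, Matrix.sub_mul, Matrix.mul_one, h1]
    congr 1
    rw [Matrix.mul_smul, Matrix.smul_mul]
    congr 1
    rw [hPcval, hPcinv]
    have : ((P : Matrix (Fin n) (Fin n) K) * D * (↑P⁻¹ : Matrix (Fin n) (Fin n) K)).map
        Polynomial.C = cm ((P : Matrix (Fin n) (Fin n) K) * D *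
          (↑P⁻¹ : Matrix (Fin n) (Fin n) K)) := rfl
    rw [this, map_mul, map_mul]
    rfl
  have h1 : Pc.val * (Pc⁻¹).val = 1 := Units.mul_inv Pc
  rw [hsplit, Matrix.det_mul, Matrix.det_mul, mul_right_comm, ← Matrix.det_mul, h1,
    Matrix.det_one, one_mul]

end Part2

section Part3

lemma exists_diag {F : Type*} [Field F] [IsAlgClosed F] {n : ℕ} (M : Matrix (Fin n) (Fin n) F)
    (N : ℕ) (hN : (N : F) ≠ 0) (hM : M ^ N = 1) :
    ∃ (P : (Matrix (Fin n) (Fin n) F)ˣ) (δ : Fin n → F),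
      M = P.val * Matrix.diagonal δ * (P⁻¹).val := by
  classical
  set f : Module.End F (Fin n → F) := Matrix.toLinAlgEquiv' M with hfdef
  have haeval : Polynomial.aeval f ((Polynomial.X : Polynomial F) ^ N - 1) = 0 := by
    rw [map_sub, map_pow, Polynomial.aeval_X, Polynomial.aeval_one, hfdef, ← map_pow, hM,
      map_one, sub_self]
  have hsq : Squarefree (Polynomial.X ^ N - 1 : Polynomial F) :=
    (Polynomial.X_pow_sub_one_separable_iff.mpr hN).squarefree
  have hss : f.IsSemisimple := Module.End.isSemisimple_of_squarefree_aeval_eq_zero hsq haeval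
  have hsup : ⨆ μ, f.eigenspace μ = ⊤ := by
    have h := Module.End.iSup_maxGenEigenspace_eq_top f
    calc ⨆ μ, f.eigenspace μ
        = ⨆ μ, f.maxGenEigenspace μ :=
          iSup_congr fun μ => (hss.isFinitelySemisimple.maxGenEigenspace_eq_eigenspace μ).symm
      _ = ⊤ := h
  have hint : DirectSum.IsInternal f.eigenspace :=
    DirectSum.isInternal_submodule_of_iSupIndep_of_iSup_eq_top f.eigenspaces_iSupIndep hsup
  let v : ∀ μ : F, Module.Basis (Module.Free.ChooseBasisIndex F (f.eigenspace μ)) F (f.eigenspace μ) :=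
    fun μ => Module.Free.chooseBasis F _
  let b := hint.collectedBasis v
  haveI : Fintype ((μ : F) × Module.Free.ChooseBasisIndex F (f.eigenspace μ)) :=
    FiniteDimensional.fintypeBasisIndex b
  have hcard : Fintype.card ((μ : F) × Module.Free.ChooseBasisIndex F (f.eigenspace μ)) = n := by
    rw [← Module.finrank_eq_card_basis b, Module.finrank_fin_fun]
  let e := Fintype.equivFinOfCardEq hcard
  let c : Module.Basis (Fin n) F (Fin n → F) := b.reindex e
  let δ : Fin n → F := fun i => (e.symm i).1
  have heig : ∀ i, f (c i) = δ i • c i := by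
    intro i
    have hmem : (c i : Fin n → F) ∈ f.eigenspace ((e.symm i).1) := by
      rw [show c i = b (e.symm i) from b.reindex_apply e i]
      exact hint.collectedBasis_mem v _
    exact Module.End.mem_eigenspace_iff.mp hmem
  have hD : LinearMap.toMatrix c c f = Matrix.diagonal δ := by
    ext i j
    rw [LinearMap.toMatrix_apply, heig j, map_smul]
    rcases eq_or_ne i j with h | h
    · subst h
      simp
    · simp [Matrix.diagonal_apply_ne _ h, Module.Basis.repr_self, Finsupp.single_apply, Ne.symm h]
  let s : Module.Basis (Fin n) F (Fin n → F) := Pi.basisFun F (Fin n)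
  have hM' : s.toMatrix c * LinearMap.toMatrix c c f * c.toMatrix s = M := by
    rw [basis_toMatrix_mul_linearMap_toMatrix_mul_basis_toMatrix, LinearMap.toMatrix_eq_toMatrix']
    show LinearMap.toMatrix' (Matrix.toLin' M) = M
    exact LinearMap.toMatrix'_toLin' M
  refine ⟨⟨s.toMatrix c, c.toMatrix s, Module.Basis.toMatrix_mul_toMatrix_flip s c,
    Module.Basis.toMatrix_mul_toMatrix_flip c s⟩, δ, ?_⟩
  rw [← hD]
  exact hM'.symm

lemma key_identity {K : Type*} [Field K] [CharZero K] {n : ℕ} (M : Matrix (Fin n) (Fin n) K)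
    (N : ℕ) (hN : N ≠ 0) (hM : M ^ N = 1) :
    ((((1 : Matrix (Fin n) (Fin n) (Polynomial K)) -
        (Polynomial.X : Polynomial K) • M.map Polynomial.C).det : Polynomial K) :
          PowerSeries K) *
      PowerSeries.mk (fun d => trS d M) = 1 := by
  classical
  set F := AlgebraicClosure K
  set φ : K →+* F := algebraMap K F with hφ
  have hinj : Function.Injective (PowerSeries.map φ) := by
    intro p q h
    ext m
    have h2 := congrArg (PowerSeries.coeff m) h
    rw [PowerSeries.coeff_map, PowerSeries.coeff_map] at h2
    exact φ.injective h2
  apply hinj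
  rw [map_mul, map_one]
  have hcoe : ∀ p : Polynomial K,
      PowerSeries.map φ (p : PowerSeries K) = ((p.map φ : Polynomial F) : PowerSeries F) := by
    intro p
    ext m
    rw [PowerSeries.coeff_map, Polynomial.coeff_coe, Polynomial.coeff_coe, Polynomial.coeff_map]
  have hmk : PowerSeries.map φ (PowerSeries.mk fun d => trS d M)
      = PowerSeries.mk (fun d => trS d (M.map φ)) := by
    ext m
    rw [PowerSeries.coeff_map, PowerSeries.coeff_mk, PowerSeries.coeff_mk, trS_map]
  have hdet : (((1 : Matrix (Fin n) (Fin n) (Polynomial K)) -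
        (Polynomial.X : Polynomial K) • M.map Polynomial.C).det).map φ
      = ((1 : Matrix (Fin n) (Fin n) (Polynomial F)) -
        (Polynomial.X : Polynomial F) • (M.map φ).map Polynomial.C).det := by
    have h3 := RingHom.map_det (Polynomial.mapRingHom φ)
      ((1 : Matrix (Fin n) (Fin n) (Polynomial K)) -
        (Polynomial.X : Polynomial K) • M.map Polynomial.C)
    rw [show (Polynomial.mapRingHom φ) (((1 : Matrix (Fin n) (Fin n) (Polynomial K)) -
        (Polynomial.X : Polynomial K) • M.map Polynomial.C).det)
      = (((1 : Matrix (Fin n) (Fin n) (Polynomial K)) -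
        (Polynomial.X : Polynomial K) • M.map Polynomial.C).det).map φ from rfl] at h3
    rw [h3]
    congr 1
    ext i j
    rcases eq_or_ne i j with h | h
    · subst h
      simp [RingHom.mapMatrix_apply, Matrix.map_apply, Matrix.sub_apply, Matrix.smul_apply,
        smul_eq_mul, Polynomial.map_sub, Polynomial.map_mul, Polynomial.map_one]
    · simp [RingHom.mapMatrix_apply, Matrix.map_apply, Matrix.sub_apply, Matrix.smul_apply,
        Matrix.one_apply_ne h, smul_eq_mul, Polynomial.map_sub, Polynomial.map_mul]
  rw [hcoe, hmk, hdet]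
  -- now over F
  have hchar : CharZero F := algebraRat.charZero F
  have hNF : ((N : ℕ) : F) ≠ 0 := Nat.cast_ne_zero.mpr hN
  have hMF : (M.map φ) ^ N = 1 := by
    rw [show (M.map φ) = φ.mapMatrix M from rfl, ← map_pow, hM, map_one]
  obtain ⟨P, δ, hPD⟩ := exists_diag (M.map φ) N hNF hMF
  rw [hPD, detPoly_conj, detPoly_diagonal]
  have h4 : (PowerSeries.mk fun d =>
      trS d (P.val * Matrix.diagonal δ * (P⁻¹).val)) =
      PowerSeries.mk fun e => ∑ s ∈ SS n e, ∏ i, δ i ^ s i := by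
    ext m
    rw [PowerSeries.coeff_mk, PowerSeries.coeff_mk, trS_conj, trS_diagonal]
  rw [h4]
  have h5 : ((∏ i, (1 - Polynomial.X * Polynomial.C (δ i)) : Polynomial F) : PowerSeries F)
      = ∏ i, (1 - PowerSeries.C (δ i) * PowerSeries.X) := by
    rw [← Polynomial.coeToPowerSeries.ringHom_apply, map_prod]
    apply Finset.prod_congr rfl
    intro i _
    rw [map_sub, map_one, map_mul, Polynomial.coeToPowerSeries.ringHom_apply,
      Polynomial.coeToPowerSeries.ringHom_apply, Polynomial.coe_X, Polynomial.coe_C, mul_comm]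
  rw [h5]
  exact diag_identity δ

end Part3

section Part4

variable {K : Type*} [Field K] {n : ℕ}

def bVfun (d : ℕ) (s : SS n d) : homogeneousSubmodule (Fin n) K d :=
  ⟨monomial s.1 (1 : K), monomial_mem_of_mem_SS s.2⟩

lemma bV_li (d : ℕ) : LinearIndependent K (bVfun (K := K) (n := n) d) := by
  apply LinearIndependent.of_comp (homogeneousSubmodule (Fin n) K d).subtype
  have h2 := (MvPolynomial.basisMonomials (Fin n) K).linearIndependent
  have h3 := h2.comp (fun s : SS n d => s.1) Subtype.val_injective
  have h : (⇑(homogeneousSubmodule (Fin n) K d).subtype ∘ bVfun d)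
      = (⇑(MvPolynomial.basisMonomials (Fin n) K) ∘ (fun s : SS n d => s.1)) := by
    funext s
    simp [bVfun, MvPolynomial.coe_basisMonomials]
  rw [h]
  exact h3

lemma bV_span (d : ℕ) :
    ⊤ ≤ Submodule.span K (Set.range (bVfun (K := K) (n := n) d)) := by
  rintro ⟨p, hp⟩ -
  have hdecomp : p = ∑ s ∈ SS n d, coeff s p • monomial s (1 : K) := homog_eq_sum hp
  have hx : (⟨p, hp⟩ : homogeneousSubmodule (Fin n) K d)
      = ∑ s ∈ (SS n d).attach, coeff s.1 p • bVfun d s := by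
    apply Subtype.val_injective
    simp only [AddSubmonoidClass.coe_finset_sum, SetLike.val_smul, bVfun]
    rw [Finset.sum_attach (SS n d) (fun s => coeff s p • monomial s (1 : K))]
    exact hdecomp
  rw [hx]
  exact Submodule.sum_mem _ fun s _ =>
    Submodule.smul_mem _ _ (Submodule.subset_span ⟨s, rfl⟩)

noncomputable def bV (d : ℕ) : Module.Basis (SS n d) K (homogeneousSubmodule (Fin n) K d) :=
  Module.Basis.mk (bV_li d) (bV_span d)

def psi (M : Matrix (Fin n) (Fin n) K) (d : ℕ) :
    homogeneousSubmodule (Fin n) K d →ₗ[K] homogeneousSubmodule (Fin n) K d :=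
  ((lin M).toLinearMap).restrict (fun _ hx => lin_mem M hx)

lemma psi_coe (M : Matrix (Fin n) (Fin n) K) (d : ℕ) (x : homogeneousSubmodule (Fin n) K d) :
    (psi M d x : MvPolynomial (Fin n) K) = lin M (x : MvPolynomial (Fin n) K) := rfl

lemma trace_psi (M : Matrix (Fin n) (Fin n) K) (d : ℕ) :
    LinearMap.trace K _ (psi M d) = trS d M := by
  classical
  rw [LinearMap.trace_eq_matrix_trace K (bV d)]
  have hmat : LinearMap.toMatrix (bV d) (bV d) (psi M d) = (Amat d M).transpose := by
    ext t s
    rw [LinearMap.toMatrix_apply]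
    have hs : psi M d (bV d s) = ∑ u : SS n d, (Amat d M) s u • bV d u := by
      apply Subtype.val_injective
      simp only [AddSubmonoidClass.coe_finset_sum, SetLike.val_smul]
      rw [psi_coe]
      simp only [bV, Module.Basis.mk_apply, bVfun, Amat]
      rw [Finset.univ_eq_attach,
        Finset.sum_attach (SS n d)
          (fun u => coeff u (lin M (monomial s.1 1)) • monomial u (1 : K))]
      exact homog_eq_sum (lin_mem M (monomial_mem_of_mem_SS s.2))
    rw [hs, Module.Basis.repr_sum_self]
    rfl
  rw [hmat, Matrix.trace_transpose]
  rfl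

lemma stepA {K : Type*} [Field K] [CharZero K] {n : ℕ}
    {G : Type*} [Group G] [Fintype G] (ρ : G →* (Matrix (Fin n) (Fin n) K)ˣ)
    (Inv : Submodule K (MvPolynomial (Fin n) K))
    (hInv : ∀ p, p ∈ Inv ↔ ∀ g : G, lin ((ρ g : Matrix (Fin n) (Fin n) K)) p = p)
    (d : ℕ) :
    (Fintype.card G : K) * ((Module.finrank K
        ((Inv ⊓ homogeneousSubmodule (Fin n) K d : Submodule K (MvPolynomial (Fin n) K)))) : K)
      = ∑ g : G, trS d ((ρ g : Matrix (Fin n) (Fin n) K)) := by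
  classical
  haveI : Module.Finite K (homogeneousSubmodule (Fin n) K d) := Module.Finite.of_basis (bV d)
  set Vd := homogeneousSubmodule (Fin n) K d with hVd
  set W : Submodule K Vd := Submodule.comap Vd.subtype (Inv ⊓ Vd) with hWdef
  have hcard0 : (Fintype.card G : K) ≠ 0 := Nat.cast_ne_zero.mpr Fintype.card_ne_zero
  set π : Vd →ₗ[K] Vd :=
    (Fintype.card G : K)⁻¹ • ∑ g : G, psi ((ρ g : Matrix (Fin n) (Fin n) K)) d with hπ
  have hval : ∀ x : Vd, (π x : MvPolynomial (Fin n) K)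
      = (Fintype.card G : K)⁻¹ •
        ∑ g : G, lin ((ρ g : Matrix (Fin n) (Fin n) K)) (x : MvPolynomial (Fin n) K) := by
    intro x
    rw [hπ]
    simp only [LinearMap.smul_apply, LinearMap.sum_apply, SetLike.val_smul,
      AddSubmonoidClass.coe_finset_sum]
    congr 1
  have hcomp : ∀ (h g : G) (q : MvPolynomial (Fin n) K),
      lin ((ρ h : Matrix (Fin n) (Fin n) K)) (lin ((ρ g : Matrix (Fin n) (Fin n) K)) q)
        = lin ((ρ (g * h) : Matrix (Fin n) (Fin n) K)) q := by
    intro h g q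
    rw [map_mul ρ g h, Units.val_mul, lin_mul]
    rfl
  have hproj : LinearMap.IsProj W π := by
    constructor
    · intro x
      rw [hWdef, Submodule.mem_comap]
      refine Submodule.mem_inf.mpr ⟨?_, by
        rw [Submodule.subtype_apply]; exact (π x).2⟩
      rw [Submodule.subtype_apply, hInv]
      intro h
      rw [hval, map_smul, map_sum]
      congr 1
      rw [Finset.sum_congr rfl (fun g _ => hcomp h g _)]
      exact Fintype.sum_equiv (Equiv.mulRight h) _ _ (fun g => rfl)
    · intro x hx
      have hxInv : (x : MvPolynomial (Fin n) K) ∈ Inv := by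
        rw [hWdef, Submodule.mem_comap, Submodule.subtype_apply] at hx
        exact (Submodule.mem_inf.mp hx).1
      apply Subtype.val_injective
      rw [hval,
        Finset.sum_congr rfl (fun g _ => (hInv _).mp hxInv g),
        Finset.sum_const, Finset.card_univ, ← Nat.cast_smul_eq_nsmul K, smul_smul,
        inv_mul_cancel₀ hcard0, one_smul]
  haveI : Module.Free K W := by exact Module.Free.of_divisionRing K W
  haveI : Module.Finite K W := by exact FiniteDimensional.finiteDimensional_submodule W
  haveI : Module.Free K (LinearMap.ker π) := by
    exact Module.Free.of_divisionRing K (LinearMap.ker π)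
  haveI : Module.Finite K (LinearMap.ker π) := by
    exact FiniteDimensional.finiteDimensional_submodule (LinearMap.ker π)
  have htr : LinearMap.trace K Vd π = (Module.finrank K W : K) := hproj.trace
  have htr2 : LinearMap.trace K Vd π
      = (Fintype.card G : K)⁻¹ * ∑ g : G, trS d ((ρ g : Matrix (Fin n) (Fin n) K)) := by
    rw [hπ, map_smul, map_sum, smul_eq_mul]
    congr 1
    exact Finset.sum_congr rfl (fun g _ => trace_psi _ d)
  have hfr : (Module.finrank K W : K)
      = ((Module.finrank K ((Inv ⊓ Vd : Submodule K (MvPolynomial (Fin n) K)))) : K) := by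
    congr 1
    exact LinearEquiv.finrank_eq (Submodule.comapSubtypeEquivOfLe inf_le_right)
  calc (Fintype.card G : K) * ((Module.finrank K
        ((Inv ⊓ homogeneousSubmodule (Fin n) K d : Submodule K (MvPolynomial (Fin n) K)))) : K)
      = (Fintype.card G : K) * (Module.finrank K W : K) := by rw [hfr]
    _ = (Fintype.card G : K) * LinearMap.trace K Vd π := by rw [htr]
    _ = (Fintype.card G : K) *
        ((Fintype.card G : K)⁻¹ * ∑ g : G, trS d ((ρ g : Matrix (Fin n) (Fin n) K))) := by
      rw [htr2]
    _ = ∑ g : G, trS d ((ρ g : Matrix (Fin n) (Fin n) K)) := by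
      rw [← mul_assoc, mul_inv_cancel₀ hcard0, one_mul]

lemma const_det {K : Type*} [CommRing K] {n : ℕ} (M : Matrix (Fin n) (Fin n) K) :
    PowerSeries.constantCoeff
      ((((1 : Matrix (Fin n) (Fin n) (Polynomial K)) -
        (Polynomial.X : Polynomial K) • M.map Polynomial.C).det : Polynomial K) :
          PowerSeries K) = 1 := by
  classical
  rw [show ⇑(PowerSeries.constantCoeff (R := K)) = ⇑(PowerSeries.coeff (R := K) 0) from
      PowerSeries.coeff_zero_eq_constantCoeff.symm,
    Polynomial.coeff_coe, Polynomial.coeff_zero_eq_eval_zero]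
  have h := RingHom.map_det (Polynomial.evalRingHom (0 : K))
    ((1 : Matrix (Fin n) (Fin n) (Polynomial K)) -
      (Polynomial.X : Polynomial K) • M.map Polynomial.C)
  rw [show (Polynomial.evalRingHom (0 : K)) (((1 : Matrix (Fin n) (Fin n) (Polynomial K)) -
      (Polynomial.X : Polynomial K) • M.map Polynomial.C).det)
    = Polynomial.eval 0 (((1 : Matrix (Fin n) (Fin n) (Polynomial K)) -
      (Polynomial.X : Polynomial K) • M.map Polynomial.C).det) from rfl] at h
  rw [h]
  have h1 : (Polynomial.evalRingHom (0 : K)).mapMatrix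
      ((1 : Matrix (Fin n) (Fin n) (Polynomial K)) -
        (Polynomial.X : Polynomial K) • M.map Polynomial.C) = 1 := by
    ext i j
    rcases eq_or_ne i j with hij | hij
    · subst hij
      simp [RingHom.mapMatrix_apply, Matrix.map_apply, Matrix.sub_apply, Matrix.smul_apply,
        smul_eq_mul]
    · simp [RingHom.mapMatrix_apply, Matrix.map_apply, Matrix.sub_apply, Matrix.smul_apply,
        Matrix.one_apply_ne hij, smul_eq_mul]
  rw [h1, Matrix.det_one]

end Part4

end

end MolienAux

open MvPolynomial

/-- Molien's formula: if the finite group `G` acts linearly on `V = Kⁿ` (char `K` = 0)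
via `ρ`, and `S = K[V]` is the polynomial ring graded by degree, then
`H(S^G, t) = (1/|G|) Σ_{g∈G} 1/det(id − t·ρ(g))` as formal power series in `t`. -/
theorem molien_formula
    (K : Type) [Field K] [CharZero K]
    (G : Type) [Group G] [Fintype G]
    (n : ℕ) (ρ : G →* (Matrix (Fin n) (Fin n) K)ˣ)
    (act : G → MvPolynomial (Fin n) K →ₐ[K] MvPolynomial (Fin n) K)
    (hact : ∀ g, act g = aeval (fun i =>
      ∑ j, ((ρ g : Matrix (Fin n) (Fin n) K) i j) • (X j : MvPolynomial (Fin n) K)))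
    (Inv : Submodule K (MvPolynomial (Fin n) K))
    (hInv : Inv = ⨅ g : G, LinearMap.eqLocus (act g).toLinearMap LinearMap.id)
    (H : PowerSeries K)
    (hH : H = PowerSeries.mk fun d =>
      ((Module.finrank K ((Inv ⊓ homogeneousSubmodule (Fin n) K d :
        Submodule K (MvPolynomial (Fin n) K)))) : K)) :
    (Fintype.card G : K) • H =
      ∑ g : G, (((((1 : Matrix (Fin n) (Fin n) (Polynomial K)) -
        (Polynomial.X : Polynomial K) •
          ((ρ g : Matrix (Fin n) (Fin n) K)).map Polynomial.C).det :
            Polynomial K) : PowerSeries K))⁻¹ := by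
  classical
  have hactlin : ∀ g : G, act g = MolienAux.lin ((ρ g : Matrix (Fin n) (Fin n) K)) := by
    intro g
    rw [hact g]
    rfl
  have hINV : ∀ p, p ∈ Inv ↔
      ∀ g : G, MolienAux.lin ((ρ g : Matrix (Fin n) (Fin n) K)) p = p := by
    intro p
    rw [hInv, Submodule.mem_iInf]
    refine forall_congr' fun g => ?_
    simp [LinearMap.mem_eqLocus, hactlin g]
  have hNpow : ∀ g : G, ((ρ g : Matrix (Fin n) (Fin n) K)) ^ (Fintype.card G) = 1 := by
    intro g
    have h1 : (ρ g) ^ (Fintype.card G) = 1 := by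
      rw [← map_pow, pow_card_eq_one, map_one]
    calc ((ρ g : Matrix (Fin n) (Fin n) K)) ^ (Fintype.card G)
        = (((ρ g) ^ (Fintype.card G) : (Matrix (Fin n) (Fin n) K)ˣ) :
            Matrix (Fin n) (Fin n) K) := (Units.val_pow_eq_pow_val _ _).symm
      _ = 1 := by rw [h1, Units.val_one]
  have hdetinv : ∀ g : G,
      (((((1 : Matrix (Fin n) (Fin n) (Polynomial K)) -
        (Polynomial.X : Polynomial K) •
          ((ρ g : Matrix (Fin n) (Fin n) K)).map Polynomial.C).det :
            Polynomial K) : PowerSeries K))⁻¹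
      = PowerSeries.mk (fun d => MolienAux.trS d ((ρ g : Matrix (Fin n) (Fin n) K))) := by
    intro g
    symm
    rw [PowerSeries.eq_inv_iff_mul_eq_one (by
      rw [MolienAux.const_det]
      exact one_ne_zero)]
    rw [mul_comm]
    exact MolienAux.key_identity _ (Fintype.card G) Fintype.card_ne_zero (hNpow g)
  rw [hH, Finset.sum_congr rfl (fun g _ => hdetinv g)]
  ext d
  rw [map_smul, map_sum]
  simp only [PowerSeries.coeff_mk, smul_eq_mul]
  exact MolienAux.stepA ρ Inv hINV d
end

section
/- Let R = ⊕_{d∈ℕ} R_d be a graded ring finitely generated over the field K = R₀ by homogeneous elements f₁,…,f_s of positive degrees d₁,…,d_s. Then for every finitely generated graded R-module M, the product (1−t^{d₁})⋯(1−t^{d_s})·H(M,t) is a Laurent polynomial with integer coefficients. -/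
open LaurentPolynomial DirectSum

noncomputable def conv (P : LaurentPolynomial ℤ) (H : ℤ → ℤ) (m : ℤ) : ℤ :=
  P.coeff.sum fun k c => c * H (m - k)

lemma conv_add_left (P Q : LaurentPolynomial ℤ) (H : ℤ → ℤ) (m : ℤ) :
    conv (P + Q) H m = conv P H m + conv Q H m := by
  unfold conv; rw [AddMonoidAlgebra.coeff_add]; exact Finsupp.sum_add_index (by intros; ring) (by intros; ring)

lemma conv_single (a r : ℤ) (H : ℤ → ℤ) (m : ℤ) :
    conv (AddMonoidAlgebra.single a r) H m = r * H (m - a) := by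
  unfold conv; rw [AddMonoidAlgebra.coeff_single]; exact Finsupp.sum_single_index (by ring)

lemma conv_zero_left (H : ℤ → ℤ) (m : ℤ) : conv 0 H m = 0 := by
  simp [conv, Finsupp.sum_zero_index]

lemma conv_one (H : ℤ → ℤ) (m : ℤ) : conv 1 H m = H m := by
  have h1 : (1 : LaurentPolynomial ℤ) = AddMonoidAlgebra.single 0 1 := rfl
  rw [h1, conv_single]; simp

lemma conv_mul_T (P : LaurentPolynomial ℤ) (e : ℤ) (H : ℤ → ℤ) (m : ℤ) :
    conv (P * T e) H m = conv P H (m - e) := by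
  let A : LaurentPolynomial ℤ →+ ℤ :=
    { toFun := fun P => conv (P * T e) H m
      map_zero' := by show conv ((0:LaurentPolynomial ℤ) * T e) H m = 0; rw [zero_mul, conv_zero_left]
      map_add' := fun P Q => by show conv ((P+Q) * T e) H m = _; rw [add_mul, conv_add_left] }
  let B : LaurentPolynomial ℤ →+ ℤ :=
    { toFun := fun P => conv P H (m - e)
      map_zero' := conv_zero_left H (m - e)
      map_add' := fun P Q => conv_add_left P Q H (m - e) }
  have hAB : A = B := by
    apply AddMonoidAlgebra.addMonoidHom_ext
    intro a b
    show conv (AddMonoidAlgebra.single a b * T e) H m = conv (AddMonoidAlgebra.single a b) H (m - e)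
    have hsingle : (AddMonoidAlgebra.single a b : LaurentPolynomial ℤ) * T e
        = AddMonoidAlgebra.single (a + e) b := by
      have h := AddMonoidAlgebra.single_mul_single (m₁ := a) (m₂ := e) (r₁ := b) (r₂ := (1:ℤ))
      rwa [mul_one] at h
    rw [hsingle, conv_single, conv_single]
    ring_nf
  exact DFunLike.congr_fun hAB P

lemma conv_sub_left (P Q : LaurentPolynomial ℤ) (H : ℤ → ℤ) (m : ℤ) :
    conv (P - Q) H m = conv P H m - conv Q H m := by
  unfold conv; rw [AddMonoidAlgebra.coeff_sub]; exact Finsupp.sum_sub_index (by intros; ring)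


lemma conv_sub_fun (P : LaurentPolynomial ℤ) (H H' : ℤ → ℤ) (m : ℤ) :
    conv P (fun j => H j - H' j) m = conv P H m - conv P H' m := by
  unfold conv
  rw [← Finsupp.sum_sub]
  apply Finsupp.sum_congr
  intros; ring

lemma conv_congr_fun (P : LaurentPolynomial ℤ) {H H' : ℤ → ℤ} (h : ∀ j, H j = H' j) (m : ℤ) :
    conv P H m = conv P H' m := by
  unfold conv; apply Finsupp.sum_congr; intros; rw [h]

lemma conv_shift (P : LaurentPolynomial ℤ) (H : ℤ → ℤ) (e m : ℤ) :
    conv P (fun j => H (j - e)) m = conv P H (m - e) := by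
  unfold conv; apply Finsupp.sum_congr; intros; ring_nf

section helpers
set_option synthInstance.maxHeartbeats 1000000
set_option maxHeartbeats 1000000
variable {K M : Type} [Field K] [AddCommGroup M] [Module K M] (ℳ : ℤ → Submodule K M)

lemma uniq (hdec : DirectSum.IsInternal ℳ) (S : Finset ℤ) (u : ℤ → M)
    (hmem : ∀ j, u j ∈ ℳ j) (hsum : ∑ j ∈ S, u j = 0) : ∀ j ∈ S, u j = 0 := by
  classical
  set y : ⨁ j, ℳ j := ∑ j ∈ S, DirectSum.of (fun j => ↥(ℳ j)) j ⟨u j, hmem j⟩ with hy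
  have hy0 : y = 0 := by
    apply hdec.injective
    rw [AddMonoidHom.map_zero, hy, map_sum]
    simpa [DirectSum.coeAddMonoidHom_of] using hsum
  intro j hj
  have h1 : y j = ⟨u j, hmem j⟩ := by
    rw [hy, DFinsupp.finset_sum_apply]
    rw [Finset.sum_eq_single_of_mem j hj]
    · exact DirectSum.of_eq_same _ _
    · intro b _ hbj; exact DirectSum.of_eq_of_ne _ _ _ (Ne.symm hbj)
  rw [hy0] at h1
  simpa using congrArg (fun z : ↥(ℳ j) => (z : M)) h1.symm

lemma decomp (hdec : DirectSum.IsInternal ℳ) (x : M) :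
    ∃ (S : Finset ℤ) (u : ℤ → M), (∀ j, u j ∈ ℳ j) ∧ (∀ j ∉ S, u j = 0) ∧ x = ∑ j ∈ S, u j := by
  classical
  obtain ⟨y, hy⟩ := hdec.surjective x
  refine ⟨y.support, fun j => (y j : M), fun j => (y j).2, fun j hj => by
    simp [DFinsupp.notMem_support_iff.mp hj], ?_⟩
  conv_lhs => rw [← hy, ← DirectSum.sum_support_of y]
  rw [map_sum]
  simp [DirectSum.coeAddMonoidHom_of]

end helpers


set_option synthInstance.maxHeartbeats 1000000 in
set_option maxHeartbeats 1000000 in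
lemma indep_of_unique_sum {K V : Type} [Field K] [AddCommGroup V] [Module K V]
    (p : ℤ → Submodule K V)
    (h : ∀ (S : Finset ℤ) (v : ℤ → V), (∀ j, v j ∈ p j) → (∑ j ∈ S, v j) = 0 →
      ∀ j ∈ S, v j = 0) :
    iSupIndep p := by
  classical
  rw [iSupIndep_iff_dfinsupp_lsum_injective]
  apply (injective_iff_map_eq_zero _).mpr
  intro z hz
  have hsum : ∑ j ∈ z.support, ((z j : V)) = 0 := by
    rw [DFinsupp.lsum_apply_apply, DFinsupp.sumAddHom_apply] at hz
    simpa [DFinsupp.sum] using hz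
  have hall := h z.support (fun j => (z j : V)) (fun j => (z j).2) hsum
  ext j
  simp only [DFinsupp.coe_zero, Pi.zero_apply]
  by_cases hj : j ∈ z.support
  · simp [hall j hj]
  · rw [DFinsupp.notMem_support_iff.mp hj]

set_option maxHeartbeats 1000000 in
set_option synthInstance.maxHeartbeats 1000000 in
theorem aux_induction (K : Type) [Field K] (R : Type) [CommRing R] [Algebra K R]
    (𝒜 : ℕ → Submodule K R) (s : ℕ) (f : Fin s → R) (d : Fin s → ℕ)
    (hf : ∀ i, f i ∈ 𝒜 (d i)) (hgen : Algebra.adjoin K (Set.range f) = ⊤)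
    [IsNoetherianRing R] :
    ∀ (σ : Finset (Fin s)) (M : Type) [AddCommGroup M] [Module K M] [Module R M]
      [IsScalarTower K R M] [Module.Finite R M]
      (ℳ : ℤ → Submodule K M), DirectSum.IsInternal ℳ →
      (∀ (i : ℕ) (r : R), r ∈ 𝒜 i → ∀ (j : ℤ) (x : M), x ∈ ℳ j → r • x ∈ ℳ (j + i)) →
      (∀ j, FiniteDimensional K (ℳ j)) →
      (∀ i ∉ σ, ∀ x : M, f i • x = 0) →
      (Function.support fun m => conv (∏ i ∈ σ, (1 - T ((d i) : ℤ)))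
        (fun j => (Module.finrank K (ℳ j) : ℤ)) m).Finite := by
  intro σ
  classical
  induction σ using Finset.induction_on with
  | empty =>
    intro M _ _ _ _ _ ℳ hdec hsm hfin hkill
    -- M is finite-dimensional over K
    obtain ⟨T', hT⟩ := Module.Finite.fg_top (R := R) (M := M)
    have hsmul : ∀ (r : R) (y : M), y ∈ Submodule.span K (T' : Set M) →
        r • y ∈ Submodule.span K (T' : Set M) := by
      intro r y hy
      have hr : r ∈ Submodule.span K ((Submonoid.closure (Set.range f) : Submonoid R) : Set R) := by
        have h1 : r ∈ Subalgebra.toSubmodule (Algebra.adjoin K (Set.range f)) := by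
          rw [hgen]; trivial
        rwa [Algebra.adjoin_eq_span] at h1
      induction hr using Submodule.span_induction with
      | mem m hm =>
        obtain ⟨l, hl, rfl⟩ := Submonoid.exists_list_of_mem_closure hm
        cases l with
        | nil => simpa using hy
        | cons a l' =>
          obtain ⟨i, rfl⟩ := hl a (List.mem_cons_self (a := a) (l := l'))
          rw [List.prod_cons, mul_smul, hkill i (Finset.notMem_empty i)]
          exact zero_mem _
      | zero => rw [zero_smul]; exact zero_mem _
      | add r1 r2 _ _ h1 h2 => rw [add_smul]; exact add_mem h1 h2
      | smul k r' _ h1 => rw [smul_assoc]; exact Submodule.smul_mem _ k h1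
    have hfinM : FiniteDimensional K M := by
      apply Module.finite_def.mpr
      refine ⟨T', eq_top_iff.mpr fun x hx' => ?_⟩
      clear hx'
      have hx : x ∈ Submodule.span R (T' : Set M) := hT ▸ Submodule.mem_top
      induction hx using Submodule.span_induction with
      | mem m hm => exact Submodule.subset_span hm
      | zero => exact zero_mem _
      | add a b _ _ h1 h2 => exact add_mem h1 h2
      | smul r a _ h1 => exact hsmul r a h1
    have hne : {j : ℤ | ℳ j ≠ ⊥}.Finite :=
      Submodule.finite_ne_bot_of_iSupIndep
        ((DirectSum.isInternal_submodule_iff_iSupIndep_and_iSup_eq_top ℳ).1 hdec).1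
    apply hne.subset
    intro m hm
    simp only [Function.mem_support] at hm
    rw [Finset.prod_empty, conv_one] at hm
    intro hbot
    apply hm
    rw [hbot]
    simp
  | @insert i σ' hiσ IH =>
    intro M _ _ _ _ _ ℳ hdec hsm hfin hkill
    set g : R := f i with hg
    set e : ℤ := ((d i : ℕ) : ℤ) with he
    have hgsm : ∀ (j : ℤ) (x : M), x ∈ ℳ j → g • x ∈ ℳ (j + e) := fun j x hx =>
      hsm (d i) g (hf i) j x hx
    set ψ : M →ₗ[R] M := LinearMap.lsmul R M g with hψ
    set N : Submodule R M := LinearMap.ker ψ with hN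
    set Rg : Submodule R M := LinearMap.range ψ with hRg
    let ι : ↥N →ₗ[K] M :=
      { toFun := fun x => (x : M)
        map_add' := fun x y => rfl
        map_smul' := fun k x => rfl }
    have hι_inj : Function.Injective ι := fun a b hab => Subtype.ext hab
    let q : M →ₗ[K] (M ⧸ Rg) :=
      { toFun := Rg.mkQ
        map_add' := fun x y => by simp
        map_smul' := fun k x => by simp [Submodule.Quotient.mk_smul] }
    have hq0 : ∀ x : M, q x = 0 ↔ x ∈ Rg := fun x => Submodule.Quotient.mk_eq_zero Rg
    set 𝒩 : ℤ → Submodule K ↥N := fun j => (ℳ j).comap ι with h𝒩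
    set 𝒞 : ℤ → Submodule K (M ⧸ Rg) := fun j => (ℳ j).map q with h𝒞
    -- membership facts
    have hmemN : ∀ x : ↥N, g • (x : M) = 0 := fun x => x.2
    have hNmem : ∀ x : M, g • x = 0 → x ∈ N := fun x hx => hx
    -- internal grading of N
    have hdecN : DirectSum.IsInternal 𝒩 := by
      rw [DirectSum.isInternal_submodule_iff_iSupIndep_and_iSup_eq_top]
      constructor
      · apply indep_of_unique_sum
        intro S v hv hsum j hj
        have hcoe : ∑ j ∈ S, ((v j : M)) = 0 := by
          have := congrArg (fun z : ↥N => (z : M)) hsum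
          simpa using this
        have := uniq ℳ hdec S (fun j => (v j : M)) (fun j => hv j) hcoe j hj
        exact Subtype.ext this
      · rw [eq_top_iff]
        intro x _
        obtain ⟨S, u, hu, hu0, hxsum⟩ := decomp ℳ hdec (x : M)
        -- each component is in N
        have hcomp : ∀ j, g • u j = 0 := by
          have hgsum : ∑ j ∈ S, g • u (j) = 0 := by
            rw [← Finset.smul_sum, ← hxsum, hmemN x]
          have huniq := uniq ℳ hdec (S.image (fun j => j + e)) (fun j => g • u (j - e))
            (fun j => by
              have := hgsm (j - e) (u (j - e)) (hu (j - e))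
              rwa [sub_add_cancel] at this)
            (by
              rw [Finset.sum_image (by intro a _ b _ h; simp only at h; omega)]
              simpa using hgsum)
          intro j
          by_cases hjS : j ∈ S
          · have := huniq (j + e) (Finset.mem_image_of_mem _ hjS)
            simpa using this
          · rw [hu0 j hjS, smul_zero]
        have hmem : ∀ j, u j ∈ N := fun j => hNmem (u j) (hcomp j)
        have : x = ∑ j ∈ S, (⟨u j, hmem j⟩ : ↥N) := by
          apply Subtype.ext
          rw [hxsum]
          simp
        rw [this]
        apply Submodule.sum_mem
        intro j _
        apply Submodule.mem_iSup_of_mem j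
        exact hu j
    -- internal grading of C
    have hdecC : DirectSum.IsInternal 𝒞 := by
      rw [DirectSum.isInternal_submodule_iff_iSupIndep_and_iSup_eq_top]
      constructor
      · apply indep_of_unique_sum
        intro S v hv hsum j hj
        have hz : ∀ j, ∃ z, z ∈ ℳ j ∧ q z = v j := by
          intro j
          obtain ⟨z, hz1, hz2⟩ := Submodule.mem_map.mp (hv j)
          exact ⟨z, hz1, hz2⟩
        choose z hz1 hz2 using hz
        set z' : ℤ → M := fun j => if j ∈ S then z j else 0 with hz'
        have hz'1 : ∀ j, z' j ∈ ℳ j := by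
          intro j; rw [hz']; dsimp only
          split
          · exact hz1 j
          · exact zero_mem _
        have hqz : q (∑ j ∈ S, z' j) = 0 := by
          rw [map_sum]
          rw [show ∑ j ∈ S, q (z' j) = ∑ j ∈ S, v j by
            apply Finset.sum_congr rfl
            intro j hjS
            rw [hz']; dsimp only; rw [if_pos hjS]; exact hz2 j]
          exact hsum
        obtain ⟨w, hw⟩ := (hq0 _).mp hqz
        obtain ⟨Sw, uw, huw, huw0, hwsum⟩ := decomp ℳ hdec w
        have hgw : (∑ j ∈ S, z' j) = ∑ l ∈ Sw, g • uw l := by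
          rw [← Finset.smul_sum, ← hwsum, ← hw]; rfl
        set S' : Finset ℤ := S ∪ Sw.image (fun l => l + e) with hS'
        set U : ℤ → M := fun j => z' j - g • uw (j - e) with hU
        have hUmem : ∀ j, U j ∈ ℳ j := by
          intro j
          apply sub_mem (hz'1 j)
          have := hgsm (j - e) (uw (j - e)) (huw (j - e))
          rwa [sub_add_cancel] at this
        have hUsum : ∑ j ∈ S', U j = 0 := by
          rw [hU]
          dsimp only
          rw [Finset.sum_sub_distrib]
          have h1 : ∑ j ∈ S', z' j = ∑ j ∈ S, z' j := by
            apply (Finset.sum_subset (Finset.subset_union_left)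
              (fun j _ hjS => by rw [hz']; dsimp only; rw [if_neg hjS])).symm
          have h2 : ∑ j ∈ S', g • uw (j - e) = ∑ l ∈ Sw, g • uw l := by
            rw [← Finset.sum_subset (Finset.subset_union_right) (fun j _ hj => by
              have : j - e ∉ Sw := fun hc => hj (Finset.mem_image.mpr ⟨j - e, hc, by omega⟩)
              rw [huw0 _ this, smul_zero])]
            rw [Finset.sum_image (by intro a _ b _ h; simp only at h; omega)]
            apply Finset.sum_congr rfl
            intro l _
            rw [show l + e - e = l by omega]
          rw [h1, h2, hgw, sub_self]
        have hUzero := uniq ℳ hdec S' U hUmem hUsum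
        have hjz : z' j = g • uw (j - e) := by
          have h := hUzero j (Finset.mem_union_left _ hj)
          rw [hU] at h
          dsimp only at h
          exact sub_eq_zero.mp h
        have hvq : v j = q (z' j) := by
          rw [hz']; dsimp only; rw [if_pos hj]; exact (hz2 j).symm
        rw [hvq, hjz]
        exact (hq0 _).mpr ⟨uw (j - e), rfl⟩
      · rw [h𝒞, ← Submodule.map_iSup,
          ((DirectSum.isInternal_submodule_iff_iSupIndep_and_iSup_eq_top ℳ).1 hdec).2,
          Submodule.map_top, LinearMap.range_eq_top]
        intro y
        obtain ⟨x, hx⟩ := Submodule.Quotient.mk_surjective Rg y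
        exact ⟨x, hx⟩
    -- scalar compatibility for N and C
    have hsmN : ∀ (i' : ℕ) (r : R), r ∈ 𝒜 i' → ∀ (j : ℤ) (x : ↥N), x ∈ 𝒩 j →
        r • x ∈ 𝒩 (j + i') := by
      intro i' r hr j x hx
      refine Submodule.mem_comap.mpr ?_
      have hcoe : ι (r • x) = r • (ι x) := rfl
      rw [hcoe]
      exact hsm i' r hr j _ hx
    have hsmC : ∀ (i' : ℕ) (r : R), r ∈ 𝒜 i' → ∀ (j : ℤ) (y : M ⧸ Rg), y ∈ 𝒞 j →
        r • y ∈ 𝒞 (j + i') := by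
      intro i' r hr j y hy
      obtain ⟨x, hx1, rfl⟩ := Submodule.mem_map.mp hy
      refine Submodule.mem_map.mpr ⟨r • x, hsm i' r hr j x hx1, ?_⟩
      show Rg.mkQ (r • x) = r • Rg.mkQ x
      rw [map_smul]
    -- the multiplication maps
    have hsmul_comm : ∀ (k : K) (x : M), g • (k • x) = k • (g • x) := fun k x => smul_comm g k x
    let φ : ∀ j : ℤ, ↥(ℳ j) →ₗ[K] ↥(ℳ (j + e)) := fun j =>
      { toFun := fun x => ⟨g • (x : M), hgsm j x x.2⟩
        map_add' := fun x y => by apply Subtype.ext; simp [smul_add]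
        map_smul' := fun k x => by apply Subtype.ext; simp [hsmul_comm] }
    let qj : ∀ j : ℤ, ↥(ℳ j) →ₗ[K] (M ⧸ Rg) := fun j => q.comp (ℳ j).subtype
    have hrange_qj : ∀ j, LinearMap.range (qj j) = 𝒞 j := by
      intro j
      rw [LinearMap.range_comp, Submodule.range_subtype]
    have hfinN : ∀ j, FiniteDimensional K (𝒩 j) := by
      intro j
      have h1 : Submodule.map ι (𝒩 j) ≤ ℳ j := Submodule.map_comap_le ι (ℳ j)
      have h2 : FiniteDimensional K ↥(Submodule.map ι (𝒩 j)) :=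
        Submodule.finiteDimensional_of_le h1
      exact LinearEquiv.finiteDimensional (Submodule.equivMapOfInjective ι hι_inj (𝒩 j)).symm
    have hfinC : ∀ j, FiniteDimensional K (𝒞 j) := by
      intro j
      have h1 : FiniteDimensional K ↥(LinearMap.range (qj j)) := inferInstance
      rwa [hrange_qj j] at h1
    -- the kill conditions
    have hkillN : ∀ i' ∉ σ', ∀ x : ↥N, f i' • x = 0 := by
      intro i' hi' x
      apply Subtype.ext
      show f i' • (x : M) = 0
      by_cases hii : i' = i
      · subst hii; exact hmemN x
      · exact hkill i' (by simp [Finset.mem_insert, hii, hi']) x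
    have hkillC : ∀ i' ∉ σ', ∀ y : M ⧸ Rg, f i' • y = 0 := by
      intro i' hi' y
      obtain ⟨x, rfl⟩ := Submodule.Quotient.mk_surjective Rg y
      rw [← Submodule.Quotient.mk_smul]
      by_cases hii : i' = i
      · subst hii
        exact (Submodule.Quotient.mk_eq_zero Rg).mpr ⟨x, rfl⟩
      · rw [hkill i' (by simp [Finset.mem_insert, hii, hi']) x]
        exact Submodule.Quotient.mk_eq_zero Rg |>.mpr (zero_mem _)
    -- dimension identities
    have hkerφ_eq : ∀ j, Submodule.map (ℳ j).subtype (LinearMap.ker (φ j))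
        = Submodule.map ι (𝒩 j) := by
      intro j
      rw [h𝒩]
      rw [Submodule.map_comap_eq]
      ext x
      simp only [Submodule.mem_map, LinearMap.mem_ker, Submodule.mem_inf, LinearMap.mem_range]
      constructor
      · rintro ⟨y, hy, rfl⟩
        have hy' : g • ((y : M)) = 0 := by
          have h : ((φ j y : ↥(ℳ (j + e))) : M) = 0 := by rw [hy]; rfl
          exact h
        exact ⟨⟨⟨(y : M), hy'⟩, rfl⟩, y.2⟩
      · rintro ⟨⟨n, hn⟩, hx⟩
        refine ⟨⟨x, hx⟩, ?_, rfl⟩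
        apply Subtype.ext
        show g • x = 0
        rw [← hn]
        exact hmemN n
    have hfrN : ∀ j, Module.finrank K (𝒩 j) = Module.finrank K (LinearMap.ker (φ j)) := by
      intro j
      rw [(Submodule.equivMapOfInjective ι hι_inj (𝒩 j)).finrank_eq, ← hkerφ_eq j,
        ← (Submodule.equivMapOfInjective (ℳ j).subtype (Submodule.injective_subtype _)
          (LinearMap.ker (φ j))).finrank_eq]
    have hkerqj_eq : ∀ j : ℤ, Submodule.map (ℳ (j+e)).subtype (LinearMap.ker (qj (j+e)))
        = Submodule.map (ℳ (j+e)).subtype (LinearMap.range (φ j)) := by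
      intro j
      ext x
      simp only [Submodule.mem_map, LinearMap.mem_ker, LinearMap.mem_range]
      constructor
      · rintro ⟨y, hy, rfl⟩
        have hyRg : ((y : M)) ∈ Rg := (hq0 _).mp hy
        obtain ⟨w, hw⟩ := hyRg
        obtain ⟨Sw, uw, huw, huw0, hwsum⟩ := decomp ℳ hdec w
        have hgw : ((y : M)) = ∑ l ∈ Sw, g • uw l := by
          rw [← Finset.smul_sum, ← hwsum, ← hw]; rfl
        set S' : Finset ℤ := insert (j+e) (Sw.image (fun l => l + e)) with hS'
        set U : ℤ → M := fun m => (if m = j + e then ((y : M)) else 0) - g • uw (m - e)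
          with hU
        have hUmem : ∀ m, U m ∈ ℳ m := by
          intro m
          rw [hU]; dsimp only
          apply sub_mem
          · split
            · next hme => rw [hme]; exact y.2
            · exact zero_mem _
          · have := hgsm (m - e) (uw (m - e)) (huw (m - e))
            rwa [sub_add_cancel] at this
        have hUsum : ∑ m ∈ S', U m = 0 := by
          rw [hU]
          dsimp only
          rw [Finset.sum_sub_distrib]
          have h1 : ∑ m ∈ S', (if m = j + e then ((y : M)) else 0) = ((y : M)) := by
            rw [Finset.sum_ite_eq' S' (j+e) (fun _ => ((y : M)))]
            rw [if_pos (Finset.mem_insert_self _ _)]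
          have h2 : ∑ m ∈ S', g • uw (m - e) = ∑ l ∈ Sw, g • uw l := by
            rw [← Finset.sum_subset (Finset.subset_insert _ _) (fun m _ hm => by
              have : m - e ∉ Sw := fun hc => hm (Finset.mem_image.mpr ⟨m - e, hc, by omega⟩)
              rw [huw0 _ this, smul_zero])]
            rw [Finset.sum_image (by intro a _ b _ h; simp only at h; omega)]
            apply Finset.sum_congr rfl
            intro l _
            rw [show l + e - e = l by omega]
          rw [h1, h2, hgw, sub_self]
        have hUz := uniq ℳ hdec S' U hUmem hUsum (j+e) (Finset.mem_insert_self _ _)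
        rw [hU] at hUz
        dsimp only at hUz
        rw [if_pos rfl] at hUz
        have hyg : ((y : M)) = g • uw (j + e - e) := sub_eq_zero.mp hUz
        rw [show j + e - e = j by omega] at hyg
        refine ⟨y, ⟨⟨uw j, huw j⟩, ?_⟩, rfl⟩
        apply Subtype.ext
        show g • uw j = ((y : M))
        rw [hyg]
      · rintro ⟨y, ⟨u', hu'⟩, rfl⟩
        refine ⟨y, ?_, rfl⟩
        rw [← hu']
        show q (g • ((u' : M))) = 0
        exact (hq0 _).mpr ⟨(u' : M), rfl⟩
    have hfr_rangeφ : ∀ j : ℤ, Module.finrank K (LinearMap.ker (qj (j+e)))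
        = Module.finrank K (LinearMap.range (φ j)) := by
      intro j
      rw [(Submodule.equivMapOfInjective (ℳ (j+e)).subtype (Submodule.injective_subtype _)
          (LinearMap.ker (qj (j+e)))).finrank_eq,
        hkerqj_eq j,
        ← (Submodule.equivMapOfInjective (ℳ (j+e)).subtype (Submodule.injective_subtype _)
          (LinearMap.range (φ j))).finrank_eq]
    have hrank1 : ∀ j : ℤ, Module.finrank K (LinearMap.range (φ j))
        + Module.finrank K (LinearMap.ker (φ j)) = Module.finrank K (ℳ j) :=
      fun j => LinearMap.finrank_range_add_finrank_ker (φ j)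
    have hrank2 : ∀ j : ℤ, Module.finrank K (LinearMap.range (qj (j+e)))
        + Module.finrank K (LinearMap.ker (qj (j+e))) = Module.finrank K (ℳ (j+e)) :=
      fun j => LinearMap.finrank_range_add_finrank_ker (qj (j+e))
    have hfrC : ∀ j, Module.finrank K (LinearMap.range (qj j)) = Module.finrank K (𝒞 j) := by
      intro j
      rw [hrange_qj j]
    have hdim : ∀ m : ℤ, (Module.finrank K (ℳ m) : ℤ) - Module.finrank K (ℳ (m - e))
        = (Module.finrank K (𝒞 m) : ℤ) - Module.finrank K (𝒩 (m - e)) := by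
      intro m
      have heq : m - e + e = m := by omega
      have hcast1 : Module.finrank K (ℳ (m - e + e)) = Module.finrank K (ℳ m) := by rw [heq]
      have hcast2 : Module.finrank K (LinearMap.range (qj (m - e + e)))
          = Module.finrank K (LinearMap.range (qj m)) := by rw [heq]
      have hcast3 : Module.finrank K (LinearMap.ker (qj (m - e + e)))
          = Module.finrank K (LinearMap.ker (qj m)) := by rw [heq]
      have h1 := hrank1 (m - e)
      have h2 := hrank2 (m - e)
      have h3 := hfr_rangeφ (m - e)
      have h4 := hfrN (m - e)
      have h5 := hfrC m
      have h3' : Module.finrank K (LinearMap.ker (qj m))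
          = Module.finrank K (LinearMap.range (φ (m - e))) := by rw [← hcast3]; exact h3
      have h2' : Module.finrank K (LinearMap.range (qj m))
          + Module.finrank K (LinearMap.ker (qj m)) = Module.finrank K (ℳ m) := by
        rw [← hcast1, ← hcast2, ← hcast3]; exact h2
      omega
    -- apply induction hypothesis
    have finN := IH ↥N 𝒩 hdecN hsmN hfinN hkillN
    have finC := IH (M ⧸ Rg) 𝒞 hdecC hsmC hfinC hkillC
    set P' : LaurentPolynomial ℤ := ∏ i' ∈ σ', (1 - T ((d i' : ℕ) : ℤ)) with hP'
    set HM : ℤ → ℤ := fun j => (Module.finrank K (ℳ j) : ℤ) with hHM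
    set HN : ℤ → ℤ := fun j => (Module.finrank K (𝒩 j) : ℤ) with hHN
    set HC : ℤ → ℤ := fun j => (Module.finrank K (𝒞 j) : ℤ) with hHC
    have hkey : ∀ m, conv (∏ i' ∈ insert i σ', (1 - T ((d i' : ℕ) : ℤ))) HM m
        = conv P' HC m - conv P' HN (m - e) := by
      intro m
      rw [Finset.prod_insert hiσ, ← he]
      rw [show (1 - T e) * P' = P' - P' * T e from by ring]
      rw [conv_sub_left, conv_mul_T]
      calc conv P' HM m - conv P' HM (m - e)
          = conv P' (fun j => HM j - HM (j - e)) m := by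
            rw [conv_sub_fun, conv_shift]
        _ = conv P' (fun j => HC j - HN (j - e)) m := conv_congr_fun P' (fun j => hdim j) m
        _ = conv P' HC m - conv P' HN (m - e) := by
            rw [conv_sub_fun, conv_shift]
    apply Set.Finite.subset (Set.Finite.union finC (finN.image (fun x => x + e)))
    intro m hm
    rw [Function.mem_support, hkey m] at hm
    by_cases h1 : conv P' HC m = 0
    · refine Set.mem_union_right _ ?_
      refine ⟨m - e, ?_, show m - e + e = m by omega⟩
      rw [Function.mem_support]
      intro h2
      apply hm
      rw [h1, h2, sub_zero]
    · exact Set.mem_union_left _ h1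




/-- Let `R = ⊕_{d∈ℕ} R_d` be a graded ring with `R₀ = K` a field, generated over `K`
by homogeneous elements `f₁,…,f_s` of positive degrees `d₁,…,d_s`. Then for every
finitely generated graded `R`-module `M`, the product
`(1−t^{d₁})⋯(1−t^{d_s})·H(M,t)` is a Laurent polynomial with integer coefficients
(stated coefficientwise). -/
theorem denominator_of_fg_module_divides_generators
    (K : Type) [Field K] (R : Type) [CommRing R] [Algebra K R]
    (𝒜 : ℕ → Submodule K R) [GradedAlgebra 𝒜]
    (h0 : 𝒜 0 = Submodule.span K {1})
    (s : ℕ) (f : Fin s → R) (d : Fin s → ℕ) (hd : ∀ i, 1 ≤ d i)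
    (hf : ∀ i, f i ∈ 𝒜 (d i))
    (hgen : Algebra.adjoin K (Set.range f) = ⊤)
    (M : Type) [AddCommGroup M] [Module K M] [Module R M] [IsScalarTower K R M]
    [Module.Finite R M]
    (ℳ : ℤ → Submodule K M) (hdec : DirectSum.IsInternal ℳ)
    (hsm : ∀ (i : ℕ) (r : R), r ∈ 𝒜 i → ∀ (j : ℤ) (x : M), x ∈ ℳ j → r • x ∈ ℳ (j + i))
    (hfin : ∀ j, FiniteDimensional K (ℳ j))
    (H : ℤ → ℤ) (hH : ∀ j, H j = Module.finrank K (ℳ j))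
    (P : LaurentPolynomial ℤ) (hP : P = ∏ i, (1 - LaurentPolynomial.T (d i))) :
    ∃ A : LaurentPolynomial ℤ, ∀ m : ℤ, (P.coeff.sum fun k c => c * H (m - k)) = A.coeff m := by
  classical
  haveI : Algebra.FiniteType K R :=
    ⟨⟨(Set.finite_range f).toFinset, by rw [Set.Finite.coe_toFinset]; exact hgen⟩⟩
  haveI : IsNoetherianRing R := Algebra.FiniteType.isNoetherianRing K R
  have hfin' := aux_induction K R 𝒜 s f d hf hgen Finset.univ M ℳ hdec hsm hfin
    (fun i hi _ => absurd (Finset.mem_univ i) hi)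
  have hfun : (fun m => (P.coeff.sum fun k c => c * H (m - k)))
      = fun m => conv (∏ i ∈ Finset.univ, (1 - T ((d i : ℕ) : ℤ)))
        (fun j => (Module.finrank K (ℳ j) : ℤ)) m := by
    funext m
    rw [show (P.coeff.sum fun k c => c * H (m - k)) = conv P H m from rfl]
    rw [conv_congr_fun P hH m, hP]
  have hsupp : (Function.support fun m => (P.coeff.sum fun k c => c * H (m - k))).Finite := by
    rw [hfun]; exact hfin'
  exact ⟨AddMonoidAlgebra.ofCoeff (Finsupp.ofSupportFinite _ hsupp), fun m => rfl⟩
end
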